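/- arXiv:1711.00700 — 5 statements merged into one kernel-verified Lean document; each statement's English description precedes it below -/
import Mathlib

section
/- Let T = {(z,ζ) ∈ [0,1]² : 0 ≤ ζ ≤ z ≤ 1} and let P, P_I : T → ℝ^{n×n} be continuous matrix-valued kernels satisfying P(z,ζ) + ∫_ζ^z P_I(z,ζ')·P(ζ',ζ) dζ' = P_I(z,ζ) for all (z,ζ) ∈ T. Then the alternative reciprocity relation P(z,ζ) + ∫_ζ^z P(z,ζ')·P_I(ζ',ζ) dζ' = P_I(z,ζ) also holds for all (z,ζ) ∈ T. -/
open Matrix MeasureTheory intervalIntegral Set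

lemma tri_swap {f : ℝ → ℝ → ℝ} (hf : Continuous (Function.uncurry f)) {a b : ℝ} (hab : a ≤ b) :
    ∫ x in a..b, ∫ y in a..x, f x y = ∫ y in a..b, ∫ x in y..b, f x y := by
  set G : ℝ → ℝ → ℝ := fun x y => if y ≤ x then f x y else 0 with hG
  have hmeasG : Measurable (Function.uncurry G) :=
    Measurable.ite (measurableSet_le measurable_snd measurable_fst) hf.measurable
      measurable_const
  obtain ⟨C, hC⟩ := (isCompact_Icc.prod isCompact_Icc).exists_bound_of_continuousOn
    (hf.continuousOn (s := Icc a b ×ˢ Icc a b))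
  have hint : Integrable (Function.uncurry G)
      ((volume.restrict (Icc a b)).prod (volume.restrict (Icc a b))) := by
    refine ⟨hmeasG.aestronglyMeasurable, HasFiniteIntegral.of_bounded (C := max C 0) ?_⟩
    rw [Measure.prod_restrict]
    filter_upwards [ae_restrict_mem ((measurableSet_Icc).prod measurableSet_Icc)] with p hp
    rcases le_or_gt p.2 p.1 with h | h
    · simp only [Function.uncurry, G, if_pos h]
      exact le_trans (hC p hp) (le_max_left _ _)
    · simp only [Function.uncurry, G, if_neg (not_le.mpr h), norm_zero]
      exact le_max_right _ _
  have key := integral_integral_swap hint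
  have hL : ∫ x in Icc a b, (∫ y in Icc a b, G x y) = ∫ x in a..b, ∫ y in a..x, f x y := by
    rw [intervalIntegral.integral_of_le hab, ← integral_Icc_eq_integral_Ioc]
    refine setIntegral_congr_fun measurableSet_Icc (fun x hx => ?_)
    have : ∀ y, G x y = (Iic x).indicator (f x) y := by
      intro y; by_cases h : y ≤ x <;> simp [G, h, indicator]
    simp_rw [this]
    rw [setIntegral_indicator measurableSet_Iic]
    have : Icc a b ∩ Iic x = Icc a x := by
      ext y; simp only [mem_inter_iff, mem_Icc, mem_Iic]
      constructor
      · rintro ⟨⟨h1, _⟩, h3⟩; exact ⟨h1, h3⟩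
      · rintro ⟨h1, h2⟩; exact ⟨⟨h1, h2.trans hx.2⟩, h2⟩
    rw [this, intervalIntegral.integral_of_le hx.1, ← integral_Icc_eq_integral_Ioc]
  have hR : ∫ y in Icc a b, (∫ x in Icc a b, G x y) = ∫ y in a..b, ∫ x in y..b, f x y := by
    rw [intervalIntegral.integral_of_le hab, ← integral_Icc_eq_integral_Ioc]
    refine setIntegral_congr_fun measurableSet_Icc (fun y hy => ?_)
    have : ∀ x, G x y = (Ici y).indicator (fun x => f x y) x := by
      intro x; by_cases h : y ≤ x <;> simp [G, h, indicator]
    simp_rw [this]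
    rw [setIntegral_indicator measurableSet_Ici]
    have : Icc a b ∩ Ici y = Icc y b := by
      ext x; simp only [mem_inter_iff, mem_Icc, mem_Ici]
      constructor
      · rintro ⟨⟨_, h2⟩, h3⟩; exact ⟨h3, h2⟩
      · rintro ⟨h1, h2⟩; exact ⟨⟨hy.1.trans h1, h2⟩, h1⟩
    rw [this, intervalIntegral.integral_of_le hy.2, ← integral_Icc_eq_integral_Ioc]
  rw [← hL, ← hR]; exact key


lemma extend_kernel (n : ℕ) (F : ℝ → ℝ → Matrix (Fin n) (Fin n) ℝ)
    (hF : ∀ i j, ContinuousOn (fun q : ℝ × ℝ => F q.1 q.2 i j)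
      {q : ℝ × ℝ | 0 ≤ q.2 ∧ q.2 ≤ q.1 ∧ q.1 ≤ 1}) :
    ∃ G : ℝ → ℝ → Matrix (Fin n) (Fin n) ℝ,
      (∀ i j, Continuous fun q : ℝ × ℝ => G q.1 q.2 i j) ∧
      (∀ q : ℝ × ℝ, q ∈ {q : ℝ × ℝ | 0 ≤ q.2 ∧ q.2 ≤ q.1 ∧ q.1 ≤ 1} →
        G q.1 q.2 = F q.1 q.2) := by
  set T : Set (ℝ × ℝ) := {q : ℝ × ℝ | 0 ≤ q.2 ∧ q.2 ≤ q.1 ∧ q.1 ≤ 1} with hT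
  have hTclosed : IsClosed T := by
    apply IsClosed.inter (isClosed_le continuous_const continuous_snd)
    exact IsClosed.inter (isClosed_le continuous_snd continuous_fst)
      (isClosed_le continuous_fst continuous_const)
  have h : ∀ i j, ∃ g : ℝ × ℝ → ℝ, Continuous g ∧ ∀ q ∈ T, g q = F q.1 q.2 i j := by
    intro i j
    have hc : Continuous (T.restrict fun q : ℝ × ℝ => F q.1 q.2 i j) :=
      continuousOn_iff_continuous_restrict.mp (hF i j)
    obtain ⟨g, hg⟩ := ContinuousMap.exists_restrict_eq hTclosed ⟨_, hc⟩
    refine ⟨g, g.continuous, fun q hq => ?_⟩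
    have := DFunLike.congr_fun hg (⟨q, hq⟩ : T)
    exact this
  choose g hgc hge using h
  refine ⟨fun z ζ => Matrix.of fun i j => g i j (z, ζ), fun i j => by simpa using hgc i j,
    fun q hq => ?_⟩
  ext i j
  simpa using hge i j q hq


lemma gronwall_zero (n : ℕ) (B : ℝ → ℝ → Matrix (Fin n) (Fin n) ℝ)
    (hBc : ∀ i j, Continuous fun q : ℝ × ℝ => B q.1 q.2 i j)
    (D : ℝ → Fin n → Fin n → ℝ) (hDc : ∀ i j, Continuous fun t => D t i j)
    (ζ z : ℝ) (hζ0 : 0 ≤ ζ) (hζz : ζ ≤ z) (hz1 : z ≤ 1)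
    (hDkey : ∀ t, ζ ≤ t → t ≤ 1 → ∀ i j,
      D t i j = -∫ s in ζ..t, ∑ k, B t s i k * D s k j) :
    ∀ i j, D z i j = 0 := by
  obtain ⟨M, hM⟩ := (isCompact_Icc.prod isCompact_Icc).exists_bound_of_continuousOn
    (f := fun q : ℝ × ℝ => ∑ i, ∑ k, |B q.1 q.2 i k|)
    (Continuous.continuousOn (by
      exact continuous_finset_sum _ fun i _ => continuous_finset_sum _ fun k _ => (hBc i k).abs))
  have hBbd : ∀ t s : ℝ, t ∈ Icc ζ z → s ∈ Icc ζ t → ∀ i k, |B t s i k| ≤ M := by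
    intro t s ht hs i k
    have hmem : ((t, s) : ℝ × ℝ) ∈ Icc (0:ℝ) 1 ×ˢ Icc (0:ℝ) 1 :=
      ⟨⟨hζ0.trans ht.1, ht.2.trans hz1⟩, ⟨hζ0.trans hs.1, hs.2.trans (ht.2.trans hz1)⟩⟩
    refine le_trans ?_ (le_trans (le_abs_self _) (hM _ hmem))
    calc |B t s i k| ≤ ∑ k, |B t s i k| :=
          Finset.single_le_sum (f := fun k => |B t s i k|) (fun k _ => abs_nonneg _)
            (Finset.mem_univ k)
      _ ≤ ∑ i, ∑ k, |B t s i k| :=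
          Finset.single_le_sum (f := fun i => ∑ k, |B t s i k|)
            (fun i _ => Finset.sum_nonneg fun k _ => abs_nonneg _) (Finset.mem_univ i)
  set g : ℝ → ℝ := fun t => ∑ i, ∑ j, |D t i j| with hgdef
  have hgc : Continuous g :=
    continuous_finset_sum _ fun i _ => continuous_finset_sum _ fun j _ => (hDc i j).abs
  have hg0 : ∀ t, 0 ≤ g t := fun t =>
    Finset.sum_nonneg fun i _ => Finset.sum_nonneg fun j _ => abs_nonneg _
  set K : ℝ := (n : ℝ) * M with hKdef
  have hgle : ∀ t ∈ Icc ζ z, g t ≤ K * ∫ s in ζ..t, g s := by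
    intro t ht
    have habs : ∀ i j, |D t i j| ≤ ∫ s in ζ..t, M * ∑ k, |D s k j| := by
      intro i j
      rw [hDkey t ht.1 (ht.2.trans hz1) i j, abs_neg]
      refine le_trans (intervalIntegral.abs_integral_le_integral_abs ht.1) ?_
      refine intervalIntegral.integral_mono_on ht.1 ?_ ?_ ?_
      · apply Continuous.intervalIntegrable
        apply Continuous.abs
        exact continuous_finset_sum _ fun k _ =>
          ((hBc i k).comp (continuous_const.prodMk continuous_id)).mul (hDc k j)
      · apply Continuous.intervalIntegrable
        exact continuous_const.mul
          (continuous_finset_sum _ fun k _ => (hDc k j).abs)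
      · intro s hs
        refine le_trans (Finset.abs_sum_le_sum_abs _ _) ?_
        rw [Finset.mul_sum]
        refine Finset.sum_le_sum fun k _ => ?_
        rw [abs_mul]
        exact mul_le_mul_of_nonneg_right (hBbd t s ht hs i k) (abs_nonneg _)
    calc g t ≤ ∑ i : Fin n, ∑ j : Fin n, ∫ s in ζ..t, M * ∑ k, |D s k j| :=
          Finset.sum_le_sum fun i _ => Finset.sum_le_sum fun j _ => habs i j
      _ = ∫ s in ζ..t, ∑ i : Fin n, ∑ j : Fin n, M * ∑ k, |D s k j| := by
          rw [intervalIntegral.integral_finset_sum]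
          · refine Finset.sum_congr rfl fun i _ => ?_
            rw [intervalIntegral.integral_finset_sum]
            intro j _
            apply Continuous.intervalIntegrable
            exact continuous_const.mul (continuous_finset_sum _ fun k _ => (hDc k j).abs)
          · intro i _
            apply Continuous.intervalIntegrable
            exact continuous_finset_sum _ fun j _ =>
              continuous_const.mul (continuous_finset_sum _ fun k _ => (hDc k j).abs)
      _ = K * ∫ s in ζ..t, g s := by
          rw [← intervalIntegral.integral_const_mul]
          refine intervalIntegral.integral_congr fun s _ => ?_
          simp only [hgdef, hKdef]
          rw [Finset.sum_comm (s := Finset.univ) (t := Finset.univ)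
            (f := fun i j => |D s i j|)]
          rw [← Finset.mul_sum, Finset.sum_const, Finset.card_univ, Fintype.card_fin,
            nsmul_eq_mul]
          ring
  set F : ℝ → ℝ := fun t => ∫ s in ζ..t, g s with hFdef
  have hF0 : ∀ t ∈ Icc ζ z, 0 ≤ F t := fun t ht =>
    intervalIntegral.integral_nonneg ht.1 fun s _ => hg0 s
  have hFc : Continuous F := intervalIntegral.continuous_primitive
    (fun a b => hgc.intervalIntegrable a b) ζ
  have hF' : ∀ t ∈ Ico ζ z, HasDerivWithinAt F (g t) (Ici t) t := fun t _ =>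
    (intervalIntegral.integral_hasDerivAt_right (hgc.intervalIntegrable _ _)
      (hgc.stronglyMeasurable.stronglyMeasurableAtFilter) hgc.continuousAt).hasDerivWithinAt
  have hbound : ∀ t ∈ Ico ζ z, ‖g t‖ ≤ K * ‖F t‖ + 0 := by
    intro t ht
    rw [add_zero, Real.norm_eq_abs, Real.norm_eq_abs, abs_of_nonneg (hg0 t),
      abs_of_nonneg (hF0 t (Ico_subset_Icc_self ht))]
    exact hgle t (Ico_subset_Icc_self ht)
  have hFz : ∀ t ∈ Icc ζ z, ‖F t‖ ≤ gronwallBound 0 K 0 (t - ζ) := by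
    refine norm_le_gronwallBound_of_norm_deriv_right_le hFc.continuousOn hF' ?_ hbound
    simp [hFdef]
  have hFzero : F z = 0 := by
    have := hFz z ⟨hζz, le_refl z⟩
    rw [gronwallBound_ε0_δ0] at this
    exact norm_le_zero_iff.mp this
  have hgz : g z = 0 := by
    have h1 := hgle z ⟨hζz, le_refl z⟩
    rw [show (∫ s in ζ..z, g s) = F z from rfl, hFzero, mul_zero] at h1
    linarith [hg0 z]
  intro i j
  have : |D z i j| ≤ g z := by
    calc |D z i j| ≤ ∑ j, |D z i j| :=
          Finset.single_le_sum (f := fun j => |D z i j|) (fun j _ => abs_nonneg _)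
            (Finset.mem_univ j)
      _ ≤ g z :=
          Finset.single_le_sum (f := fun i => ∑ j, |D z i j|)
            (fun i _ => Finset.sum_nonneg fun j _ => abs_nonneg _) (Finset.mem_univ i)
  rw [hgz] at this
  exact abs_eq_zero.mp (le_antisymm this (abs_nonneg _))


lemma key_identity (n : ℕ) (A B : ℝ → ℝ → Matrix (Fin n) (Fin n) ℝ)
    (hAc : ∀ i j, Continuous fun q : ℝ × ℝ => A q.1 q.2 i j)
    (hBc : ∀ i j, Continuous fun q : ℝ × ℝ => B q.1 q.2 i j)
    (hrecA : ∀ z ζ : ℝ, 0 ≤ ζ → ζ ≤ z → z ≤ 1 → ∀ i j,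
      A z ζ i j + ∫ s in ζ..z, (B z s * A s ζ) i j = B z ζ i j)
    (ζ : ℝ) (hζ0 : 0 ≤ ζ) (t : ℝ) (hζt : ζ ≤ t) (ht1 : t ≤ 1) (i j : Fin n) :
    (∫ u in ζ..t, ((B t u * A u ζ) i j - (A t u * B u ζ) i j))
      = -∫ s in ζ..t, ∑ k, B t s i k *
          (∫ u in ζ..s, ((B s u * A u ζ) k j - (A s u * B u ζ) k j)) := by
  have cA : ∀ {α : Type} [TopologicalSpace α] {u v : α → ℝ}, Continuous u → Continuous v →
      ∀ i j, Continuous fun x => A (u x) (v x) i j :=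
    fun hu hv i j => (hAc i j).comp (hu.prodMk hv)
  have cB : ∀ {α : Type} [TopologicalSpace α] {u v : α → ℝ}, Continuous u → Continuous v →
      ∀ i j, Continuous fun x => B (u x) (v x) i j :=
    fun hu hv i j => (hBc i j).comp (hu.prodMk hv)
  set g1 : ℝ → ℝ → ℝ := fun s u => (B t s * (B s u * A u ζ)) i j with hg1def
  set g2 : ℝ → ℝ → ℝ := fun u s => ((B t u * A u s) * B s ζ) i j with hg2def
  have hg1c : Continuous fun p : ℝ × ℝ => g1 p.1 p.2 := by
    simp only [hg1def, Matrix.mul_apply, Finset.mul_sum]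
    refine continuous_finset_sum _ fun k _ => continuous_finset_sum _ fun l _ => ?_
    exact (cB continuous_const continuous_fst i k).mul
      ((cB continuous_fst continuous_snd k l).mul (cA continuous_snd continuous_const l j))
  have hg2c : Continuous fun p : ℝ × ℝ => g2 p.1 p.2 := by
    simp only [hg2def, Matrix.mul_apply, Finset.sum_mul]
    refine continuous_finset_sum _ fun k _ => continuous_finset_sum _ fun l _ => ?_
    exact ((cB continuous_const continuous_fst i l).mul
      (cA continuous_fst continuous_snd l k)).mul (cB continuous_snd continuous_const k j)
  -- step 1: pointwise rewrite of the integrand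
  have step1 : ∀ s ∈ Set.uIcc ζ t, ((B t s * A s ζ) i j - (A t s * B s ζ) i j)
      = (-(∫ u in ζ..s, g1 s u) + ∫ u in s..t, g2 u s) := by
    intro s hs
    rw [uIcc_of_le hζt] at hs
    have h1 : ∀ k, A s ζ k j - B s ζ k j = -(∫ u in ζ..s, (B s u * A u ζ) k j) := by
      intro k; have := hrecA s ζ hζ0 hs.1 (hs.2.trans ht1) k j; linarith
    have h2 : ∀ k, B t s i k - A t s i k = ∫ u in s..t, (B t u * A u s) i k := by
      intro k; have := hrecA t s (hζ0.trans hs.1) hs.2 ht1 i k; linarith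
    have cBA1 : ∀ k, Continuous fun u => (B s u * A u ζ) k j := by
      intro k
      simp only [Matrix.mul_apply]
      exact continuous_finset_sum _ fun l _ =>
        (cB continuous_const continuous_id k l).mul (cA continuous_id continuous_const l j)
    have cBA2 : ∀ k, Continuous fun u => (B t u * A u s) i k := by
      intro k
      simp only [Matrix.mul_apply]
      exact continuous_finset_sum _ fun l _ =>
        (cB continuous_const continuous_id i l).mul (cA continuous_id continuous_const l k)
    have e1 : (∫ u in ζ..s, g1 s u)
        = ∑ k, B t s i k * ∫ u in ζ..s, (B s u * A u ζ) k j := by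
      have hpt : ∀ u, g1 s u = ∑ k, B t s i k * (B s u * A u ζ) k j := fun u => by
        rw [hg1def]; simp only [Matrix.mul_apply]
      simp_rw [hpt]
      rw [intervalIntegral.integral_finset_sum
        (f := fun k u => B t s i k * (B s u * A u ζ) k j)
        (fun k _ => (continuous_const.mul (cBA1 k)).intervalIntegrable _ _)]
      exact Finset.sum_congr rfl fun k _ => intervalIntegral.integral_const_mul _ _
    have e2 : (∫ u in s..t, g2 u s)
        = ∑ k, (∫ u in s..t, (B t u * A u s) i k) * B s ζ k j := by
      have hpt : ∀ u, g2 u s = ∑ k, (B t u * A u s) i k * B s ζ k j := fun u => by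
        rw [hg2def]; simp only [Matrix.mul_apply]
      simp_rw [hpt]
      rw [intervalIntegral.integral_finset_sum
        (f := fun k u => (B t u * A u s) i k * B s ζ k j)
        (fun k _ => ((cBA2 k).mul continuous_const).intervalIntegrable _ _)]
      exact Finset.sum_congr rfl fun k _ => intervalIntegral.integral_mul_const _ _
    calc (B t s * A s ζ) i j - (A t s * B s ζ) i j
        = ∑ k, B t s i k * (A s ζ k j - B s ζ k j)
            + ∑ k, (B t s i k - A t s i k) * B s ζ k j := by
          simp only [Matrix.mul_apply, mul_sub, sub_mul, Finset.sum_sub_distrib]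
          ring
      _ = ∑ k, B t s i k * -(∫ u in ζ..s, (B s u * A u ζ) k j)
            + ∑ k, (∫ u in s..t, (B t u * A u s) i k) * B s ζ k j := by
          refine congrArg₂ (· + ·) (Finset.sum_congr rfl fun k _ => ?_)
            (Finset.sum_congr rfl fun k _ => ?_)
          · rw [h1 k]
          · rw [h2 k]
      _ = -(∫ u in ζ..s, g1 s u) + ∫ u in s..t, g2 u s := by
          rw [e1, e2]
          simp only [mul_neg, Finset.sum_neg_distrib]
  rw [intervalIntegral.integral_congr step1]
  have cBA : ∀ (s : ℝ) (k : Fin n), Continuous fun u => (B s u * A u ζ) k j := by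
    intro s k
    simp only [Matrix.mul_apply]
    exact continuous_finset_sum _ fun l _ =>
      (cB continuous_const continuous_id k l).mul (cA continuous_id continuous_const l j)
  have cAB : ∀ (s : ℝ) (k : Fin n), Continuous fun u => (A s u * B u ζ) k j := by
    intro s k
    simp only [Matrix.mul_apply]
    exact continuous_finset_sum _ fun l _ =>
      (cA continuous_const continuous_id k l).mul (cB continuous_id continuous_const l j)
  have c1 : Continuous fun s => ∫ u in ζ..s, g1 s u :=
    intervalIntegral.continuous_parametric_intervalIntegral_of_continuous (f := g1)
      (by exact hg1c) continuous_id
  have c2' : Continuous fun s => ∫ u in ζ..s, g2 s u :=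
    intervalIntegral.continuous_parametric_intervalIntegral_of_continuous (f := g2)
      (by exact hg2c) continuous_id
  have hg2swap : Continuous fun p : ℝ × ℝ => g2 p.2 p.1 :=
    hg2c.comp continuous_swap
  have c2 : Continuous fun s => ∫ u in s..t, g2 u s := by
    have heq : (fun s => ∫ u in s..t, g2 u s)
        = fun s => (∫ u in ζ..t, g2 u s) - ∫ u in ζ..s, g2 u s := by
      funext s
      rw [← intervalIntegral.integral_interval_sub_left
        (Continuous.intervalIntegrable (show Continuous fun u => g2 u s by
          exact hg2c.comp (continuous_id.prodMk continuous_const)) _ _)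
        (Continuous.intervalIntegrable (show Continuous fun u => g2 u s by
          exact hg2c.comp (continuous_id.prodMk continuous_const)) _ _)]
    rw [heq]
    exact (intervalIntegral.continuous_parametric_intervalIntegral_of_continuous'
        (f := fun s u => g2 u s) (by exact hg2swap) ζ t).sub
      (intervalIntegral.continuous_parametric_intervalIntegral_of_continuous
        (f := fun s u => g2 u s) (by exact hg2swap) continuous_id)
  rw [intervalIntegral.integral_add ((show Continuous fun s => -∫ u in ζ..s, g1 s u from c1.neg).intervalIntegrable _ _)
    (c2.intervalIntegrable _ _), intervalIntegral.integral_neg,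
    ← tri_swap (f := g2) (by exact hg2c) hζt, neg_add_eq_sub,
    ← intervalIntegral.integral_sub (c2'.intervalIntegrable _ _) (c1.intervalIntegrable _ _),
    ← intervalIntegral.integral_neg]
  refine intervalIntegral.integral_congr fun s hs => ?_
  rw [← intervalIntegral.integral_sub
    (Continuous.intervalIntegrable (show Continuous fun u => g2 s u by
      exact hg2c.comp (continuous_const.prodMk continuous_id)) _ _)
    (Continuous.intervalIntegrable (show Continuous fun u => g1 s u by
      exact hg1c.comp (continuous_const.prodMk continuous_id)) _ _)]
  have eRHS : ∑ k, B t s i k *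
        (∫ u in ζ..s, ((B s u * A u ζ) k j - (A s u * B u ζ) k j))
      = ∫ u in ζ..s, ∑ k, B t s i k * ((B s u * A u ζ) k j - (A s u * B u ζ) k j) := by
    rw [intervalIntegral.integral_finset_sum
      (f := fun k u => B t s i k * ((B s u * A u ζ) k j - (A s u * B u ζ) k j))
      (fun k _ => (continuous_const.mul ((cBA s k).sub (cAB s k))).intervalIntegrable _ _)]
    exact Finset.sum_congr rfl fun k _ => (intervalIntegral.integral_const_mul _ _).symm
  rw [eRHS, ← intervalIntegral.integral_neg]
  refine intervalIntegral.integral_congr fun u hu => ?_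
  calc g2 s u - g1 s u
      = (B t s * (A s u * B u ζ)) i j - (B t s * (B s u * A u ζ)) i j := by
        simp only [hg2def, hg1def]
        rw [Matrix.mul_assoc]
    _ = ∑ k, B t s i k * (A s u * B u ζ) k j
        - ∑ k, B t s i k * (B s u * A u ζ) k j := by
        simp only [Matrix.mul_apply]
    _ = -(∑ k, B t s i k * ((B s u * A u ζ) k j - (A s u * B u ζ) k j)) := by
        simp only [mul_sub, Finset.sum_sub_distrib]
        ring


/-- Let `P, P_I` be continuous `n × n`-matrix-valued kernels on the triangle
`T = {(z,ζ) : 0 ≤ ζ ≤ z ≤ 1}` satisfying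
`P z ζ + ∫_ζ^z P_I z ζ' * P ζ' ζ dζ' = P_I z ζ` on `T`. Then the alternative reciprocity
relation `P z ζ + ∫_ζ^z P z ζ' * P_I ζ' ζ dζ' = P_I z ζ` also holds on `T`. -/
theorem statement8 (n : ℕ)
    (P PI : ℝ → ℝ → Matrix (Fin n) (Fin n) ℝ)
    (hPcont : ∀ i j, ContinuousOn (fun q : ℝ × ℝ => P q.1 q.2 i j)
      {q : ℝ × ℝ | 0 ≤ q.2 ∧ q.2 ≤ q.1 ∧ q.1 ≤ 1})
    (hPIcont : ∀ i j, ContinuousOn (fun q : ℝ × ℝ => PI q.1 q.2 i j)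
      {q : ℝ × ℝ | 0 ≤ q.2 ∧ q.2 ≤ q.1 ∧ q.1 ≤ 1})
    (hrec : ∀ z ζ : ℝ, 0 ≤ ζ → ζ ≤ z → z ≤ 1 → ∀ i j,
      P z ζ i j + ∫ ζ' in ζ..z, (PI z ζ' * P ζ' ζ) i j = PI z ζ i j) :
    ∀ z ζ : ℝ, 0 ≤ ζ → ζ ≤ z → z ≤ 1 → ∀ i j,
      P z ζ i j + ∫ ζ' in ζ..z, (P z ζ' * PI ζ' ζ) i j = PI z ζ i j := by
  obtain ⟨A, hAc, hAe⟩ := extend_kernel n P hPcont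
  obtain ⟨B, hBc, hBe⟩ := extend_kernel n PI hPIcont
  have hAe' : ∀ {z ζ : ℝ}, 0 ≤ ζ → ζ ≤ z → z ≤ 1 → A z ζ = P z ζ :=
    fun h1 h2 h3 => hAe (_, _) ⟨h1, h2, h3⟩
  have hBe' : ∀ {z ζ : ℝ}, 0 ≤ ζ → ζ ≤ z → z ≤ 1 → B z ζ = PI z ζ :=
    fun h1 h2 h3 => hBe (_, _) ⟨h1, h2, h3⟩
  -- generic continuity of entries along continuous curves
  have cA : ∀ {α : Type} [TopologicalSpace α] {u v : α → ℝ}, Continuous u → Continuous v →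
      ∀ i j, Continuous fun x => A (u x) (v x) i j :=
    fun hu hv i j => (hAc i j).comp (hu.prodMk hv)
  have cB : ∀ {α : Type} [TopologicalSpace α] {u v : α → ℝ}, Continuous u → Continuous v →
      ∀ i j, Continuous fun x => B (u x) (v x) i j :=
    fun hu hv i j => (hBc i j).comp (hu.prodMk hv)
  have cmul : ∀ {α : Type} [TopologicalSpace α] {M N : α → Matrix (Fin n) (Fin n) ℝ},
      (∀ i j, Continuous fun x => M x i j) → (∀ i j, Continuous fun x => N x i j) →
      ∀ i j, Continuous fun x => (M x * N x) i j := by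
    intro α _ M N hM hN i j
    simp only [Matrix.mul_apply]
    exact continuous_finset_sum _ fun k _ => (hM i k).mul (hN k j)
  -- the reciprocity relation for the extensions
  have hrecA : ∀ z ζ : ℝ, 0 ≤ ζ → ζ ≤ z → z ≤ 1 → ∀ i j,
      A z ζ i j + ∫ s in ζ..z, (B z s * A s ζ) i j = B z ζ i j := by
    intro z ζ h0 hzz h1 i j
    have h2 : EqOn (fun s => (B z s * A s ζ) i j) (fun s => (PI z s * P s ζ) i j)
        (Set.uIcc ζ z) := by
      intro s hs
      rw [uIcc_of_le hzz] at hs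
      simp only
      rw [hBe' (h0.trans hs.1) hs.2 h1, hAe' h0 hs.1 (hs.2.trans h1)]
    rw [intervalIntegral.integral_congr h2, hAe' h0 hzz h1, hBe' h0 hzz h1]
    exact hrec z ζ h0 hzz h1 i j
  intro z ζ hζ0 hζz hz1 i j
  -- the difference kernel
  set D : ℝ → Fin n → Fin n → ℝ :=
    fun t i j => ∫ u in ζ..t, ((B t u * A u ζ) i j - (A t u * B u ζ) i j) with hDdef
  -- continuity of D entries
  have hDc : ∀ i j, Continuous fun t => D t i j := by
    intro i j
    apply intervalIntegral.continuous_parametric_intervalIntegral_of_continuous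
      (f := fun t u => (B t u * A u ζ) i j - (A t u * B u ζ) i j) ?_ continuous_id
    exact ((cmul (fun i j => cB continuous_fst continuous_snd i j)
        (fun i j => cA continuous_snd continuous_const i j) i j).sub
      (cmul (fun i j => cA continuous_fst continuous_snd i j)
        (fun i j => cB continuous_snd continuous_const i j) i j))
  -- key homogeneous Volterra identity
  have hDkey : ∀ t, ζ ≤ t → t ≤ 1 → ∀ i j,
      D t i j = -∫ s in ζ..t, ∑ k, B t s i k * D s k j := by
    intro t h1 h2 i' j'
    simp only [hDdef]
    exact key_identity n A B hAc hBc hrecA ζ hζ0 t h1 h2 i' j'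
  -- Gronwall: D z = 0
  have hDz : ∀ i j, D z i j = 0 :=
    gronwall_zero n B hBc D hDc ζ z hζ0 hζz hz1 hDkey
  -- conclude
  have hint1 : IntervalIntegrable (fun u => (B z u * A u ζ) i j) volume ζ z :=
    ((cmul (fun i j => cB continuous_const continuous_id i j)
      (fun i j => cA continuous_id continuous_const i j)) i j).intervalIntegrable _ _
  have hint2 : IntervalIntegrable (fun u => (A z u * B u ζ) i j) volume ζ z :=
    ((cmul (fun i j => cA continuous_const continuous_id i j)
      (fun i j => cB continuous_id continuous_const i j)) i j).intervalIntegrable _ _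
  have hDz' : (∫ u in ζ..z, (A z u * B u ζ) i j) = ∫ u in ζ..z, (B z u * A u ζ) i j := by
    have := hDz i j
    rw [hDdef] at this
    simp only at this
    rw [intervalIntegral.integral_sub hint1 hint2, sub_eq_zero] at this
    exact this.symm
  have hcongr1 : EqOn (fun u => (P z u * PI u ζ) i j) (fun u => (A z u * B u ζ) i j)
      (Set.uIcc ζ z) := by
    intro s hs
    rw [uIcc_of_le hζz] at hs
    simp only
    rw [hAe' (hζ0.trans hs.1) hs.2 hz1, hBe' hζ0 hs.1 (hs.2.trans hz1)]
  have hcongr2 : EqOn (fun u => (B z u * A u ζ) i j) (fun u => (PI z u * P u ζ) i j)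
      (Set.uIcc ζ z) := by
    intro s hs
    rw [uIcc_of_le hζz] at hs
    simp only
    rw [hBe' (hζ0.trans hs.1) hs.2 hz1, hAe' hζ0 hs.1 (hs.2.trans hz1)]
  rw [intervalIntegral.integral_congr hcongr1, hDz', intervalIntegral.integral_congr hcongr2]
  exact hrec z ζ hζ0 hζz hz1 i j
end

section
/- Let λ_i, λ_j : [0,1] → ℝ be continuously differentiable with λ_i(z) > 0 and λ_j(z) > 0 on [0,1], set φ_i(z) = ∫₀^z dζ/λ_i(ζ) and φ_j(z) = ∫₀^z dζ/λ_j(ζ), and let f : [0,1] → ℝ be continuously differentiable. On the region D = {(z,ζ) ∈ [0,1]² : 0 ≤ φ_i(z) − φ_j(ζ) ≤ φ_i(1)}, define σ(z,ζ) = φ_i⁻¹(φ_i(z) − φ_j(ζ)) and p(z,ζ) = f(σ(z,ζ))/λ_j(ζ). Then: (i) at every interior point of D the partial derivatives of p exist and satisfy the transport equation λ_i(z)·∂_z p(z,ζ) + ∂_ζ(p(z,ζ)·λ_j(ζ)) = 0; and (ii) for every z ∈ [0,1], σ(z,0) = z and p(z,0)·λ_j(0) = f(z). -/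
open Set intervalIntegral

private lemma aux_intble {g : ℝ → ℝ} (hg : ContinuousOn g (Set.Icc 0 1))
    {a b : ℝ} (ha : a ∈ Set.Icc (0:ℝ) 1) (hb : b ∈ Set.Icc (0:ℝ) 1) :
    IntervalIntegrable g MeasureTheory.volume a b := by
  apply ContinuousOn.intervalIntegrable
  exact hg.mono (Set.uIcc_subset_Icc ha hb)

private lemma aux_hasDeriv {g : ℝ → ℝ} (hg : ContinuousOn g (Set.Icc 0 1))
    {x : ℝ} (hx : x ∈ Set.Ioo (0:ℝ) 1) :
    HasDerivAt (fun u => ∫ t in (0:ℝ)..u, g t) (g x) x := by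
  apply intervalIntegral.integral_hasDerivAt_right
  · exact aux_intble hg (by norm_num) (Set.mem_Icc.2 ⟨hx.1.le, hx.2.le⟩)
  · exact (hg.mono Set.Ioo_subset_Icc_self).stronglyMeasurableAtFilter isOpen_Ioo x hx
  · exact (hg.mono Set.Ioo_subset_Icc_self).continuousAt (isOpen_Ioo.mem_nhds hx)

private lemma aux_strictMono {g : ℝ → ℝ} (hg : ContinuousOn g (Set.Icc 0 1))
    (hgpos : ∀ t ∈ Set.Icc (0:ℝ) 1, 0 < g t) :
    StrictMonoOn (fun u => ∫ t in (0:ℝ)..u, g t) (Set.Icc 0 1) := by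
  intro a ha b hb hab
  have h1 : IntervalIntegrable g MeasureTheory.volume 0 a := aux_intble hg (by norm_num) ha
  have h2 : IntervalIntegrable g MeasureTheory.volume a b := aux_intble hg ha hb
  have := intervalIntegral.integral_add_adjacent_intervals h1 h2
  simp only
  rw [← this]
  have hpos : 0 < ∫ t in a..b, g t := by
    apply intervalIntegral.intervalIntegral_pos_of_pos_on h2 _ hab
    intro x hx
    exact hgpos x ⟨ha.1.trans hx.1.le, hx.2.le.trans hb.2⟩
  linarith

/-- For continuously differentiable positive `lami, lamj` on `[0,1]` with
`φi z = ∫₀^z dζ / lami ζ`, `φj z = ∫₀^z dζ / lamj ζ`, inverse `ψ` of `φi`, and `f` continuously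
differentiable, on `D = {(z,ζ) ∈ [0,1]² : 0 ≤ φi z − φj ζ ≤ φi 1}` define
`σ z ζ = ψ (φi z − φj ζ)` and `p z ζ = f (σ z ζ) / lamj ζ`. Then (i) at every interior point
of `D` the partial derivatives of `p` exist and satisfy
`lami z * ∂_z p z ζ + ∂_ζ (p z ζ * lamj ζ) = 0`; and (ii) for every `z ∈ [0,1]`,
`σ z 0 = z` and `p z 0 * lamj 0 = f z`. -/
theorem statement9 (lami lamj : ℝ → ℝ)
    (hlami : ContDiffOn ℝ 1 lami (Set.Icc 0 1))
    (hlamj : ContDiffOn ℝ 1 lamj (Set.Icc 0 1))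
    (hposi : ∀ z ∈ Set.Icc (0:ℝ) 1, 0 < lami z)
    (hposj : ∀ z ∈ Set.Icc (0:ℝ) 1, 0 < lamj z)
    (φi φj : ℝ → ℝ)
    (hφi : ∀ z, φi z = ∫ ζ in (0:ℝ)..z, 1 / lami ζ)
    (hφj : ∀ z, φj z = ∫ ζ in (0:ℝ)..z, 1 / lamj ζ)
    (ψ : ℝ → ℝ)
    (hψ₁ : ∀ z ∈ Set.Icc (0:ℝ) 1, ψ (φi z) = z)
    (hψ₂ : ∀ y ∈ Set.Icc (0:ℝ) (φi 1), ψ y ∈ Set.Icc (0:ℝ) 1 ∧ φi (ψ y) = y)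
    (f : ℝ → ℝ)
    (hf : ContDiffOn ℝ 1 f (Set.Icc 0 1))
    (σ : ℝ → ℝ → ℝ) (hσ : ∀ z ζ, σ z ζ = ψ (φi z - φj ζ))
    (p : ℝ → ℝ → ℝ) (hp : ∀ z ζ, p z ζ = f (σ z ζ) / lamj ζ) :
    (∀ q ∈ interior {q : ℝ × ℝ | q.1 ∈ Set.Icc (0:ℝ) 1 ∧ q.2 ∈ Set.Icc (0:ℝ) 1 ∧
        0 ≤ φi q.1 - φj q.2 ∧ φi q.1 - φj q.2 ≤ φi 1},
      ∃ pz pζ : ℝ,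
        HasDerivAt (fun z => p z q.2) pz q.1 ∧
        HasDerivAt (fun ζ => p q.1 ζ * lamj ζ) pζ q.2 ∧
        lami q.1 * pz + pζ = 0) ∧
    (∀ z ∈ Set.Icc (0:ℝ) 1, σ z 0 = z ∧ p z 0 * lamj 0 = f z) := by
  have hconti : ContinuousOn (fun t => 1 / lami t) (Set.Icc 0 1) :=
    continuousOn_const.div hlami.continuousOn (fun x hx => (hposi x hx).ne')
  have hcontj : ContinuousOn (fun t => 1 / lamj t) (Set.Icc 0 1) :=
    continuousOn_const.div hlamj.continuousOn (fun x hx => (hposj x hx).ne')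
  have hφi0 : φi 0 = 0 := by rw [hφi]; simp
  have hφj0 : φj 0 = 0 := by rw [hφj]; simp
  have hφimono : StrictMonoOn φi (Set.Icc 0 1) := by
    have := aux_strictMono hconti (fun t ht => by have := hposi t ht; positivity)
    intro a ha b hb hab
    rw [hφi, hφi]; exact this ha hb hab
  have hφid : ∀ x ∈ Set.Ioo (0:ℝ) 1, HasDerivAt φi (1 / lami x) x := by
    intro x hx
    have := aux_hasDeriv hconti hx
    exact this.congr_of_eventuallyEq (Filter.Eventually.of_forall fun z => (hφi z))
  have hφjd : ∀ x ∈ Set.Ioo (0:ℝ) 1, HasDerivAt φj (1 / lamj x) x := by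
    intro x hx
    have := aux_hasDeriv hcontj hx
    exact this.congr_of_eventuallyEq (Filter.Eventually.of_forall fun z => (hφj z))
  have hφi1pos : 0 < φi 1 := by
    have := hφimono (Set.mem_Icc.2 ⟨le_refl 0, by norm_num⟩)
      (Set.mem_Icc.2 ⟨by norm_num, le_refl 1⟩) (by norm_num)
    rw [hφi0] at this; exact this
  have hψmono : StrictMonoOn ψ (Set.Icc 0 (φi 1)) := by
    intro y1 hy1 y2 hy2 h12
    obtain ⟨hm1, he1⟩ := hψ₂ y1 hy1
    obtain ⟨hm2, he2⟩ := hψ₂ y2 hy2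
    by_contra hle
    push_neg at hle
    rcases eq_or_lt_of_le hle with h | h
    · rw [← he1, ← he2, h] at h12; exact lt_irrefl _ h12
    · have := hφimono hm2 hm1 h
      rw [he1, he2] at this; exact absurd h12 (not_lt.2 this.le)
  constructor
  · rintro ⟨z, ζ⟩ hq
    set S := {q : ℝ × ℝ | q.1 ∈ Set.Icc (0:ℝ) 1 ∧ q.2 ∈ Set.Icc (0:ℝ) 1 ∧
        0 ≤ φi q.1 - φj q.2 ∧ φi q.1 - φj q.2 ≤ φi 1} with hS
    have hqS : (z, ζ) ∈ S := interior_subset hq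
    obtain ⟨hz01, hζ01, hu0, hu1⟩ := hqS
    simp only at hz01 hζ01 hu0 hu1
    -- a neighborhood of z (in the first coordinate) lies in S
    have hnbd1 : {z' : ℝ | (z', ζ) ∈ S} ∈ nhds z := by
      have hc : Continuous (fun z' : ℝ => (z', ζ)) := by fun_prop
      have := hc.continuousAt (x := z) |>.preimage_mem_nhds
        (mem_interior_iff_mem_nhds.1 hq)
      exact Filter.mem_of_superset this (fun x hx => hx)
    have hnbd2 : {ζ' : ℝ | (z, ζ') ∈ S} ∈ nhds ζ := by
      have hc : Continuous (fun ζ' : ℝ => (z, ζ')) := by fun_prop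
      have := hc.continuousAt (x := ζ) |>.preimage_mem_nhds
        (mem_interior_iff_mem_nhds.1 hq)
      exact Filter.mem_of_superset this (fun x hx => hx)
    have hz : z ∈ Set.Ioo (0:ℝ) 1 := by
      have : Set.Icc (0:ℝ) 1 ∈ nhds z :=
        Filter.mem_of_superset hnbd1 (fun x hx => hx.1)
      simpa [interior_Icc] using mem_interior_iff_mem_nhds.2 this
    have hζio : ζ ∈ Set.Ioo (0:ℝ) 1 := by
      have : Set.Icc (0:ℝ) 1 ∈ nhds ζ :=
        Filter.mem_of_superset hnbd2 (fun x hx => hx.2.1)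
      simpa [interior_Icc] using mem_interior_iff_mem_nhds.2 this
    -- get an interval around z inside the slice
    obtain ⟨ε, hε, hball⟩ := Metric.mem_nhds_iff.1 hnbd1
    -- strict inequality 0 < u
    have hu0' : 0 < φi z - φj ζ := by
      rcases eq_or_lt_of_le hu0 with h | h
      · exfalso
        set z' := max (z - ε / 2) (z / 2) with hz'
        have hz'lt : z' < z := by
          apply max_lt <;> [linarith; linarith [hz.1]]
        have hz'mem : z' ∈ Set.Icc (0:ℝ) 1 := by
          constructor
          · have h0 : (0:ℝ) ≤ z / 2 := by linarith [hz.1]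
            exact le_trans h0 (le_max_right _ _)
          · exact le_trans hz'lt.le hz01.2
        have hz'ball : z' ∈ Metric.ball z ε := by
          rw [Metric.mem_ball, Real.dist_eq, abs_sub_lt_iff]
          constructor
          · linarith
          · have : z - ε / 2 ≤ z' := le_max_left _ _
            linarith
        have hmem := hball hz'ball
        have : 0 ≤ φi z' - φj ζ := hmem.2.2.1
        have hlt : φi z' < φi z := hφimono hz'mem hz01 hz'lt
        linarith [h.symm ▸ this]
      · exact h
    have hu1' : φi z - φj ζ < φi 1 := by
      rcases eq_or_lt_of_le hu1 with h | h
      · exfalso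
        set z' := min (z + ε / 2) ((z + 1) / 2) with hz'
        have hz'gt : z < z' := by
          apply lt_min <;> [linarith; linarith [hz.2]]
        have hz'mem : z' ∈ Set.Icc (0:ℝ) 1 := by
          constructor
          · exact le_trans hz01.1 hz'gt.le
          · exact le_trans (min_le_right _ _) (by linarith [hz.2])
        have hz'ball : z' ∈ Metric.ball z ε := by
          rw [Metric.mem_ball, Real.dist_eq, abs_sub_lt_iff]
          constructor
          · have : z' ≤ z + ε / 2 := min_le_left _ _
            linarith
          · linarith
        have hmem := hball hz'ball
        have hle : φi z' - φj ζ ≤ φi 1 := hmem.2.2.2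
        have hlt : φi z < φi z' := hφimono hz01 hz'mem hz'gt
        linarith
      · exact h
    set u := φi z - φj ζ with hu
    obtain ⟨hxm, hxe⟩ := hψ₂ u ⟨hu0'.le, hu1'.le⟩
    set x := ψ u with hxdef
    have hx : x ∈ Set.Ioo (0:ℝ) 1 := by
      constructor
      · rcases eq_or_lt_of_le hxm.1 with h | h
        · exfalso; rw [← h] at hxe; rw [hφi0] at hxe; linarith
        · exact h
      · rcases eq_or_lt_of_le hxm.2 with h | h
        · exfalso; rw [h] at hxe; linarith
        · exact h
    -- continuity of ψ at u
    have hψcont : ContinuousAt ψ u := by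
      apply hψmono.continuousAt_of_image_mem_nhds (Icc_mem_nhds hu0' hu1')
      apply Filter.mem_of_superset (Icc_mem_nhds hx.1 hx.2)
      intro x' hx'
      refine ⟨φi x', ?_, hψ₁ x' hx'⟩
      constructor
      · rw [← hφi0]; exact (hφimono.monotoneOn) ⟨le_refl 0, by norm_num⟩ hx' hx'.1
      · exact (hφimono.monotoneOn) hx' ⟨by norm_num, le_refl 1⟩ hx'.2
    -- derivative of ψ at u
    have hψd : HasDerivAt ψ (lami x) u := by
      have hd : HasDerivAt φi (1 / lami x) (ψ u) := hφid x hx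
      have hne : (1 : ℝ) / lami x ≠ 0 := by
        have := hposi x (Set.Ioo_subset_Icc_self hx); positivity
      have hev : ∀ᶠ y in nhds u, φi (ψ y) = y := by
        filter_upwards [Icc_mem_nhds hu0' hu1'] with y hy
        exact (hψ₂ y hy).2
      have := HasDerivAt.of_local_left_inverse hψcont hd hne hev
      simpa using this
    -- derivative of f at x
    have hfd : HasDerivAt f (deriv f x) x := by
      have : DifferentiableAt ℝ f x :=
        ((hf.differentiableOn one_ne_zero).differentiableAt
          (Icc_mem_nhds hx.1 hx.2))
      exact this.hasDerivAt
    have hljne : lamj ζ ≠ 0 := (hposj ζ (Set.Ioo_subset_Icc_self hζio)).ne'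
    have hline : lami z ≠ 0 := (hposi z (Set.Ioo_subset_Icc_self hz)).ne'
    -- z-derivative
    have hdz : HasDerivAt (fun z' => p z' ζ)
        (deriv f x * (lami x * (1 / lami z)) / lamj ζ) z := by
      have h1 : HasDerivAt (fun z' => φi z' - φj ζ) (1 / lami z) z :=
        (hφid z hz).sub_const _
      have h2 : HasDerivAt (fun z' => ψ (φi z' - φj ζ)) (lami x * (1 / lami z)) z :=
        HasDerivAt.comp z (by simpa [← hu] using hψd) h1
      have h3 : HasDerivAt (fun z' => f (ψ (φi z' - φj ζ)))
          (deriv f x * (lami x * (1 / lami z))) z :=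
        HasDerivAt.comp z (by simpa [← hu, ← hxdef] using hfd) h2
      have h4 := h3.div_const (lamj ζ)
      refine h4.congr_of_eventuallyEq (Filter.Eventually.of_forall fun z' => ?_)
      simp only [hp, hσ]
    -- ζ-derivative
    have hdζ : HasDerivAt (fun ζ' => p z ζ' * lamj ζ')
        (deriv f x * (lami x * (-(1 / lamj ζ)))) ζ := by
      have h1 : HasDerivAt (fun ζ' => φi z - φj ζ') (-(1 / lamj ζ)) ζ :=
        (hφjd ζ hζio).const_sub _
      have h2 : HasDerivAt (fun ζ' => ψ (φi z - φj ζ')) (lami x * (-(1 / lamj ζ))) ζ :=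
        HasDerivAt.comp ζ (by simpa [← hu] using hψd) h1
      have h3 : HasDerivAt (fun ζ' => f (ψ (φi z - φj ζ')))
          (deriv f x * (lami x * (-(1 / lamj ζ)))) ζ :=
        HasDerivAt.comp ζ (by simpa [← hu, ← hxdef] using hfd) h2
      refine h3.congr_of_eventuallyEq ?_
      filter_upwards [Ioo_mem_nhds hζio.1 hζio.2] with ζ' hζ'
      simp only [hp, hσ]
      field_simp [(hposj ζ' (Set.Ioo_subset_Icc_self hζ')).ne']
    refine ⟨_, _, hdz, hdζ, ?_⟩
    field_simp [hline, hljne]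
    ring
  · intro z hz
    have h1 : σ z 0 = z := by
      rw [hσ, hφj0, sub_zero]; exact hψ₁ z hz
    refine ⟨h1, ?_⟩
    rw [hp, h1]
    have h0 : lamj 0 ≠ 0 := (hposj 0 (by norm_num)).ne'
    exact div_mul_cancel₀ _ h0
end

section
/- (Constructive solution of the N_I initial value problem.) Under the hypotheses of the previous statement, write λ_k(z) for the k-th diagonal entry of Λ(z) and φ_k(z) = ∫₀^z dζ/λ_k(ζ), set Ψ_k(z,ζ) = exp((φ_k(z) − φ_k(ζ))·F_c), A₁(z) = E₁ᵀA₀(z), A₂(z) = E₂ᵀA₀(z), and denote by e_i the i-th standard unit (column) vector. Define row vectors ν_iᵀ(z) = −e_iᵀK·Ψ_i(z,0) + ∫₀^z (1/λ_i(ζ))·e_iᵀ(A₁(ζ)K − E₁ᵀG(ζ))·Ψ_i(z,ζ) dζ for i = 1,…,p, and μ_iᵀ(z) = e_iᵀ(C₂ − Q₀K)·Ψ_{i+p}(z,0) + ∫₀^z (1/λ_{i+p}(ζ))·e_iᵀ(A₂(ζ)K − E₂ᵀG(ζ))·Ψ_{i+p}(z,ζ) dζ for i = 1,…,m. Then the matrix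 function N_I(z) whose first p rows are ν_1ᵀ(z),…,ν_pᵀ(z) and whose last m rows are μ_1ᵀ(z),…,μ_mᵀ(z) satisfies Λ(z)·N_I'(z) − N_I(z)·F_c = −A₀(z)·E₁ᵀN_I(0) − G(z) on [0,1] with E₁ᵀN_I(0) = −K and (E₂ᵀ − Q₀E₁ᵀ)N_I(0) = C₂. -/
open Matrix

open Matrix MeasureTheory intervalIntegral

section AuxLemmas

/-- FTC: derivative within `Icc 0 1` of a primitive of a continuous function. -/
lemma myFtcIcc {E : Type*} [NormedAddCommGroup E] [NormedSpace ℝ E] [CompleteSpace E]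
    {f : ℝ → E} (hf : ContinuousOn f (Set.Icc 0 1)) {z : ℝ} (hz : z ∈ Set.Icc (0:ℝ) 1) :
    HasDerivWithinAt (fun u => ∫ x in (0:ℝ)..u, f x) (f z) (Set.Icc 0 1) z := by
  haveI : Fact (z ∈ Set.Icc (0:ℝ) 1) := ⟨hz⟩
  refine intervalIntegral.integral_hasDerivWithinAt_right ?_
      (hf.stronglyMeasurableAtFilter_nhdsWithin measurableSet_Icc z) (hf z hz)
  refine (hf.mono ?_).intervalIntegrable
  rw [Set.uIcc_of_le hz.1]
  exact Set.Icc_subset_Icc le_rfl hz.2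

/-- Entrywise derivative of `t ↦ exp (φ t • Fc)`. -/
lemma myExpEntryDeriv {n : ℕ} (Fc : Matrix (Fin n) (Fin n) ℝ)
    {φ : ℝ → ℝ} {φ' z : ℝ} {s : Set ℝ} (hφ : HasDerivWithinAt φ φ' s z) (k j : Fin n) :
    HasDerivWithinAt (fun t => NormedSpace.exp (φ t • Fc) k j)
      (φ' * (NormedSpace.exp (φ z • Fc) * Fc) k j) s z := by
  letI : SeminormedRing (Matrix (Fin n) (Fin n) ℝ) := Matrix.linftyOpSemiNormedRing
  letI : NormedRing (Matrix (Fin n) (Fin n) ℝ) := Matrix.linftyOpNormedRing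
  letI : NormedAlgebra ℝ (Matrix (Fin n) (Fin n) ℝ) := Matrix.linftyOpNormedAlgebra
  have h1 : HasDerivAt (fun u : ℝ => NormedSpace.exp (u • Fc))
      (NormedSpace.exp (φ z • Fc) * Fc) (φ z) := hasDerivAt_exp_smul_const Fc (φ z)
  have h2 : HasDerivWithinAt (fun t => NormedSpace.exp (φ t • Fc))
      (φ' • (NormedSpace.exp (φ z • Fc) * Fc)) s z :=
    (h1.hasDerivWithinAt (s := Set.univ)).scomp z hφ (Set.mapsTo_univ _ _)
  have h3 := ((Matrix.entryLinearMap ℝ ℝ k j).toContinuousLinearMap.hasFDerivAt).comp_hasDerivWithinAt z h2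
  exact h3

/-- Entrywise continuity of `t ↦ exp (φ t • Fc)`. -/
lemma myExpEntryCont {n : ℕ} (Fc : Matrix (Fin n) (Fin n) ℝ)
    {φ : ℝ → ℝ} {s : Set ℝ} (hφ : ContinuousOn φ s) (k j : Fin n) :
    ContinuousOn (fun t => NormedSpace.exp (φ t • Fc) k j) s := by
  letI : SeminormedRing (Matrix (Fin n) (Fin n) ℝ) := Matrix.linftyOpSemiNormedRing
  letI : NormedRing (Matrix (Fin n) (Fin n) ℝ) := Matrix.linftyOpNormedRing
  letI : NormedAlgebra ℝ (Matrix (Fin n) (Fin n) ℝ) := Matrix.linftyOpNormedAlgebra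
  have h1 : Continuous (fun M : Matrix (Fin n) (Fin n) ℝ => NormedSpace.exp M) :=
    continuous_iff_continuousAt.2 fun M => (NormedSpace.exp_analytic (𝕂 := ℝ) M).continuousAt
  have h2 : Continuous (fun M : Matrix (Fin n) (Fin n) ℝ => M k j) :=
    ((continuous_apply j).comp (continuous_apply k))
  exact (h2.comp h1).comp_continuousOn (hφ.smul continuousOn_const)

lemma myExpSplit {n : ℕ} (Fc : Matrix (Fin n) (Fin n) ℝ) (a b : ℝ) :
    NormedSpace.exp ((a - b) • Fc)
      = NormedSpace.exp ((-b) • Fc) * NormedSpace.exp (a • Fc) := by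
  rw [← Matrix.exp_add_of_commute _ _ (((Commute.refl Fc).smul_left (-b)).smul_right a)]
  congr 1
  rw [← add_smul]
  ring_nf

lemma myExpCancel {n : ℕ} (Fc : Matrix (Fin n) (Fin n) ℝ) (a : ℝ) :
    NormedSpace.exp ((-a) • Fc) * NormedSpace.exp (a • Fc) = 1 := by
  rw [← Matrix.exp_add_of_commute _ _ (((Commute.refl Fc).smul_left (-a)).smul_right a)]
  rw [← add_smul, neg_add_cancel, zero_smul, NormedSpace.exp_zero]

lemma mySelE1 {p m : ℕ} {q : Type*} [Fintype q]
    (E₁ : Matrix (Fin (p+m)) (Fin p) ℝ)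
    (hE₁ : ∀ i j, E₁ i j = if (i:ℕ) = (j:ℕ) then 1 else 0)
    (M : Matrix (Fin (p+m)) q ℝ) (a : Fin p) (x : q) :
    (E₁ᵀ * M) a x = M ⟨a, by omega⟩ x := by
  rw [Matrix.mul_apply]
  rw [Finset.sum_eq_single (⟨a, by omega⟩ : Fin (p+m))]
  · rw [Matrix.transpose_apply, hE₁]; simp
  · intro b _ hb
    rw [Matrix.transpose_apply, hE₁]
    have hne : ¬((b:ℕ) = (a:ℕ)) := by
      intro h; exact hb (Fin.ext (by simpa using h))
    simp [hne]
  · simp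

lemma mySelE2 {p m : ℕ} {q : Type*} [Fintype q]
    (E₂ : Matrix (Fin (p+m)) (Fin m) ℝ)
    (hE₂ : ∀ i j, E₂ i j = if (i:ℕ) = p + (j:ℕ) then 1 else 0)
    (M : Matrix (Fin (p+m)) q ℝ) (b : Fin m) (x : q) :
    (E₂ᵀ * M) b x = M ⟨p + b, by omega⟩ x := by
  rw [Matrix.mul_apply]
  rw [Finset.sum_eq_single (⟨p + b, by omega⟩ : Fin (p+m))]
  · rw [Matrix.transpose_apply, hE₂]; simp
  · intro i _ hi
    rw [Matrix.transpose_apply, hE₂]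
    have hne : ¬((i:ℕ) = p + (b:ℕ)) := by
      intro h; exact hi (Fin.ext (by simpa using h))
    simp [hne]
  · simp

/-- main workhorse: the explicit row function solves the scalar-row ODE. -/
lemma myRowSolution {nxi : ℕ} (Fc : Matrix (Fin nxi) (Fin nxi) ℝ)
    (lam : ℝ → ℝ) (hlamc : ContinuousOn lam (Set.Icc 0 1))
    (hlamne : ∀ z ∈ Set.Icc (0:ℝ) 1, lam z ≠ 0)
    (c : Fin nxi → ℝ) (B : ℝ → Fin nxi → ℝ)
    (hB : ∀ j, ContinuousOn (fun z => B z j) (Set.Icc 0 1))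
    (φ : ℝ → ℝ) (hφ : ∀ z, φ z = ∫ ζ in (0:ℝ)..z, 1 / lam ζ)
    (r : ℝ → Fin nxi → ℝ)
    (hr : ∀ z, r z = Matrix.vecMul c (NormedSpace.exp ((φ z - φ 0) • Fc))
        + ∫ ζ in (0:ℝ)..z, (1 / lam ζ) •
            Matrix.vecMul (B ζ) (NormedSpace.exp ((φ z - φ ζ) • Fc))) :
    r 0 = c ∧ ∀ z ∈ Set.Icc (0:ℝ) 1, ∀ j, HasDerivWithinAt (fun t => r t j)
      ((1 / lam z) * (B z j + Matrix.vecMul (r z) Fc j)) (Set.Icc 0 1) z := by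
  have h0mem : (0:ℝ) ∈ Set.Icc (0:ℝ) 1 := Set.left_mem_Icc.mpr zero_le_one
  have hφ0 : φ 0 = 0 := by rw [hφ]; exact intervalIntegral.integral_same
  have hφfun : φ = fun u => ∫ ζ in (0:ℝ)..u, 1 / lam ζ := funext hφ
  have hinvc : ContinuousOn (fun ζ => 1 / lam ζ) (Set.Icc 0 1) :=
    continuousOn_const.div hlamc hlamne
  have hφd : ∀ z ∈ Set.Icc (0:ℝ) 1, HasDerivWithinAt φ (1 / lam z) (Set.Icc 0 1) z := by
    intro z hz
    rw [hφfun]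
    exact myFtcIcc hinvc hz
  have hφc : ContinuousOn φ (Set.Icc 0 1) := fun z hz => (hφd z hz).continuousWithinAt
  set E : ℝ → Matrix (Fin nxi) (Fin nxi) ℝ := fun t => NormedSpace.exp (φ t • Fc) with hE
  set N : ℝ → Matrix (Fin nxi) (Fin nxi) ℝ := fun t => NormedSpace.exp ((-φ t) • Fc) with hN
  set g : ℝ → Fin nxi → ℝ := fun ζ => (1 / lam ζ) • Matrix.vecMul (B ζ) (N ζ) with hg
  -- continuity of g
  have hgc : ContinuousOn g (Set.Icc 0 1) := by
    rw [continuousOn_pi]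
    intro j
    have : ∀ ζ, g ζ j = (1 / lam ζ) * ∑ k, B ζ k * N ζ k j := by
      intro ζ; simp [hg, Matrix.vecMul, dotProduct]
    simp only [this]
    exact hinvc.mul (continuousOn_finset_sum _ fun k _ =>
      (hB k).mul (myExpEntryCont Fc hφc.neg k j))
  have hgint : ∀ z ∈ Set.Icc (0:ℝ) 1, IntervalIntegrable g volume 0 z := by
    intro z hz
    refine (hgc.mono ?_).intervalIntegrable
    rw [Set.uIcc_of_le hz.1]; exact Set.Icc_subset_Icc le_rfl hz.2
  set w : ℝ → Fin nxi → ℝ := fun t => c + ∫ ζ in (0:ℝ)..t, g ζ with hw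
  -- rewrite r via w and E
  have hwr : ∀ z ∈ Set.Icc (0:ℝ) 1, r z = Matrix.vecMul (w z) (E z) := by
    intro z hz
    rw [hr, hw]
    have hint : ∀ ζ, (1 / lam ζ) •
        Matrix.vecMul (B ζ) (NormedSpace.exp ((φ z - φ ζ) • Fc))
        = Matrix.vecMul (g ζ) (E z) := by
      intro ζ
      rw [myExpSplit Fc (φ z) (φ ζ)]
      rw [show NormedSpace.exp (-φ ζ • Fc) = N ζ from rfl,
        show NormedSpace.exp (φ z • Fc) = E z from rfl]
      simp only [hg, Matrix.smul_vecMul, Matrix.vecMul_vecMul]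
    have hL := ((E z).vecMulLinear.toContinuousLinearMap).intervalIntegral_comp_comm
      (μ := volume) (a := (0:ℝ)) (b := z) (f := g) (hgint z hz)
    have hLcoe : ∀ v, (E z).vecMulLinear.toContinuousLinearMap v = Matrix.vecMul v (E z) := by
      intro v; simp
    have e1 : Matrix.vecMul c (NormedSpace.exp ((φ z - φ 0) • Fc))
        = Matrix.vecMul c (E z) := by rw [hφ0, sub_zero]
    have e2 : (∫ ζ in (0:ℝ)..z, (1 / lam ζ) •
          Matrix.vecMul (B ζ) (NormedSpace.exp ((φ z - φ ζ) • Fc)))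
        = Matrix.vecMul (∫ ζ in (0:ℝ)..z, g ζ) (E z) := by
      calc (∫ ζ in (0:ℝ)..z, (1 / lam ζ) •
            Matrix.vecMul (B ζ) (NormedSpace.exp ((φ z - φ ζ) • Fc)))
          = ∫ ζ in (0:ℝ)..z, (E z).vecMulLinear.toContinuousLinearMap (g ζ) := by
            simp only [hint, hLcoe]
        _ = (E z).vecMulLinear.toContinuousLinearMap (∫ ζ in (0:ℝ)..z, g ζ) := hL
        _ = Matrix.vecMul (∫ ζ in (0:ℝ)..z, g ζ) (E z) := hLcoe _
    rw [e1, e2, Matrix.add_vecMul]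
  constructor
  · -- r 0 = c
    rw [hwr 0 h0mem, hw]
    simp only [intervalIntegral.integral_same, add_zero, hE, hφ0, zero_smul,
      NormedSpace.exp_zero, Matrix.vecMul_one]
  · intro z hz j
    -- derivative of each piece
    have hwd : ∀ k, HasDerivWithinAt (fun t => w t k) (g z k) (Set.Icc 0 1) z := by
      intro k
      have hPi : HasDerivWithinAt (fun t => w t) (g z) (Set.Icc 0 1) z := by
        rw [hw]
        exact (myFtcIcc hgc hz).const_add c
      have := ((ContinuousLinearMap.proj (R := ℝ) (φ := fun _ : Fin nxi => ℝ) k).hasFDerivAt).comp_hasDerivWithinAt z hPi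
      simpa [Function.comp_def] using this
    have hEd : ∀ k, HasDerivWithinAt (fun t => E t k j)
        ((1 / lam z) * (E z * Fc) k j) (Set.Icc 0 1) z := by
      intro k
      exact myExpEntryDeriv Fc (hφd z hz) k j
    have hF : HasDerivWithinAt (fun t => ∑ k, w t k * E t k j)
        (∑ k, (g z k * E z k j + w z k * ((1 / lam z) * (E z * Fc) k j)))
        (Set.Icc 0 1) z :=
      HasDerivWithinAt.fun_sum fun k _ => (hwd k).mul (hEd k)
    -- identify the derivative value
    have hval : (∑ k, (g z k * E z k j + w z k * ((1 / lam z) * (E z * Fc) k j)))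
        = (1 / lam z) * (B z j + Matrix.vecMul (r z) Fc j) := by
      have h1 : ∑ k, g z k * E z k j = (1 / lam z) * B z j := by
        have : ∑ k, g z k * E z k j = Matrix.vecMul (g z) (E z) j := by
          simp [Matrix.vecMul, dotProduct]
        rw [this, hg]
        simp only [Matrix.smul_vecMul, Matrix.vecMul_vecMul]
        rw [hN, hE, myExpCancel Fc (φ z), Matrix.vecMul_one]
        simp
      have h2 : ∑ k, w z k * (E z * Fc) k j = Matrix.vecMul (r z) Fc j := by
        have : ∑ k, w z k * (E z * Fc) k j = Matrix.vecMul (w z) (E z * Fc) j := by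
          simp [Matrix.vecMul, dotProduct]
        rw [this, ← Matrix.vecMul_vecMul, ← hwr z hz]
      rw [Finset.sum_add_distrib, h1]
      rw [Finset.sum_congr rfl (fun k _ => by ring : ∀ k ∈ Finset.univ,
        w z k * ((1 / lam z) * (E z * Fc) k j) = (1 / lam z) * (w z k * (E z * Fc) k j))]
      rw [← Finset.mul_sum, h2]
      ring
    rw [← hval]
    refine hF.congr (fun t ht => ?_) ?_
    · rw [hwr t ht]
      simp [Matrix.vecMul, dotProduct]
    · rw [hwr z hz]
      simp [Matrix.vecMul, dotProduct]

end AuxLemmas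

/-- the explicit matrix function `N_I` built from the row-vector solutions
`ν_iᵀ(z) = −e_iᵀK·Ψ_i(z,0) + ∫₀^z (1/λ_i(ζ))·e_iᵀ(A₁(ζ)K − E₁ᵀG(ζ))·Ψ_i(z,ζ) dζ` (first `p`
rows) and
`μ_iᵀ(z) = e_iᵀ(C₂ − Q₀K)·Ψ_{i+p}(z,0) + ∫₀^z (1/λ_{i+p}(ζ))·e_iᵀ(A₂(ζ)K − E₂ᵀG(ζ))·Ψ_{i+p}(z,ζ) dζ`
(last `m` rows) solves `Λ(z)·N_I'(z) − N_I(z)·F_c = −A₀(z)·E₁ᵀN_I(0) − G(z)` on `[0,1]` with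
`E₁ᵀN_I(0) = −K` and `(E₂ᵀ − Q₀E₁ᵀ)N_I(0) = C₂`. -/
theorem statement11 (p m nxi : ℕ) (hp : 1 ≤ p) (hm : 1 ≤ m)
    (eps : Fin (p+m) → ℝ → ℝ)
    (heps : ∀ k, ContDiffOn ℝ 1 (eps k) (Set.Icc 0 1))
    (hpos : ∀ k, ∀ z ∈ Set.Icc (0:ℝ) 1, 0 < eps k z)
    (lam : Fin (p+m) → ℝ → ℝ)
    (hlam : ∀ (k : Fin (p+m)) z, lam k z = if (k:ℕ) < p then eps k z else -eps k z)
    (Λ : ℝ → Matrix (Fin (p+m)) (Fin (p+m)) ℝ)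
    (hΛ : ∀ z, Λ z = Matrix.diagonal (fun k => lam k z))
    (E₁ : Matrix (Fin (p+m)) (Fin p) ℝ)
    (hE₁ : ∀ i j, E₁ i j = if (i:ℕ) = (j:ℕ) then 1 else 0)
    (E₂ : Matrix (Fin (p+m)) (Fin m) ℝ)
    (hE₂ : ∀ i j, E₂ i j = if (i:ℕ) = p + (j:ℕ) then 1 else 0)
    (Fc : Matrix (Fin nxi) (Fin nxi) ℝ)
    (K : Matrix (Fin p) (Fin nxi) ℝ)
    (Q₀ : Matrix (Fin m) (Fin p) ℝ)
    (C₂ : Matrix (Fin m) (Fin nxi) ℝ)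
    (A₀ : ℝ → Matrix (Fin (p+m)) (Fin p) ℝ)
    (hA₀ : ∀ i j, ContinuousOn (fun z => A₀ z i j) (Set.Icc 0 1))
    (G : ℝ → Matrix (Fin (p+m)) (Fin nxi) ℝ)
    (hG : ∀ i j, ContinuousOn (fun z => G z i j) (Set.Icc 0 1))
    (φ : Fin (p+m) → ℝ → ℝ)
    (hφ : ∀ k z, φ k z = ∫ ζ in (0:ℝ)..z, 1 / lam k ζ)
    (Ψ : Fin (p+m) → ℝ → ℝ → Matrix (Fin nxi) (Fin nxi) ℝ)
    (hΨ : ∀ k z ζ, Ψ k z ζ = NormedSpace.exp ((φ k z - φ k ζ) • Fc))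
    (A₁ : ℝ → Matrix (Fin p) (Fin p) ℝ) (hA₁ : ∀ z, A₁ z = E₁ᵀ * A₀ z)
    (A₂ : ℝ → Matrix (Fin m) (Fin p) ℝ) (hA₂ : ∀ z, A₂ z = E₂ᵀ * A₀ z)
    (NI : ℝ → Matrix (Fin (p+m)) (Fin nxi) ℝ)
    (hNI : ∀ z (i : Fin (p+m)) (j : Fin nxi), NI z i j =
      if h : (i:ℕ) < p then
        (-(Matrix.vecMul (fun j' => K ⟨i, h⟩ j') (Ψ i z 0))
          + ∫ ζ in (0:ℝ)..z, (1 / lam i ζ) •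
              Matrix.vecMul (fun j' => (A₁ ζ * K - E₁ᵀ * G ζ) ⟨i, h⟩ j') (Ψ i z ζ)) j
      else
        (Matrix.vecMul
            (fun j' => (C₂ - Q₀ * K) ⟨(i:ℕ) - p, by have := i.isLt; omega⟩ j') (Ψ i z 0)
          + ∫ ζ in (0:ℝ)..z, (1 / lam i ζ) •
              Matrix.vecMul
                (fun j' => (A₂ ζ * K - E₂ᵀ * G ζ) ⟨(i:ℕ) - p, by have := i.isLt; omega⟩ j')
                (Ψ i z ζ)) j) :
    ∃ NI' : ℝ → Matrix (Fin (p+m)) (Fin nxi) ℝ,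
      (∀ z ∈ Set.Icc (0:ℝ) 1, ∀ i j,
        HasDerivWithinAt (fun t => NI t i j) (NI' z i j) (Set.Icc 0 1) z) ∧
      (∀ z ∈ Set.Icc (0:ℝ) 1,
        Λ z * NI' z - NI z * Fc = -(A₀ z * (E₁ᵀ * NI 0)) - G z) ∧
      E₁ᵀ * NI 0 = -K ∧
      (E₂ᵀ - Q₀ * E₁ᵀ) * NI 0 = C₂ := by
  classical
  have h0mem : (0:ℝ) ∈ Set.Icc (0:ℝ) 1 := Set.left_mem_Icc.mpr zero_le_one
  have hlamc : ∀ k, ContinuousOn (lam k) (Set.Icc 0 1) := by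
    intro k
    have he : ContinuousOn (eps k) (Set.Icc 0 1) := (heps k).continuousOn
    by_cases h : (k:ℕ) < p
    · have hk : lam k = eps k := funext fun z => by rw [hlam, if_pos h]
      rw [hk]; exact he
    · have hk : lam k = fun z => -eps k z := funext fun z => by rw [hlam, if_neg h]
      rw [hk]; exact he.neg
  have hlamne : ∀ k, ∀ z ∈ Set.Icc (0:ℝ) 1, lam k z ≠ 0 := by
    intro k z hz
    rw [hlam]
    by_cases h : (k:ℕ) < p
    · simpa [h] using (hpos k z hz).ne'
    · simp only [h, if_false, ne_eq, neg_eq_zero]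
      exact (hpos k z hz).ne'
  set Bm : ℝ → Matrix (Fin (p+m)) (Fin nxi) ℝ := fun z => A₀ z * K - G z with hBm
  have hBc : ∀ i j, ContinuousOn (fun z => Bm z i j) (Set.Icc 0 1) := by
    intro i j
    have hrepr : (fun z => Bm z i j) = fun z => (∑ k, A₀ z i k * K k j) - G z i j := by
      funext z; simp [hBm, Matrix.mul_apply, Matrix.sub_apply]
    rw [hrepr]
    exact (continuousOn_finset_sum _ fun k _ => (hA₀ i k).mul continuousOn_const).sub (hG i j)
  set C : Fin (p+m) → Fin nxi → ℝ := fun i j =>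
    if h : (i:ℕ) < p then -K ⟨i, h⟩ j
    else (C₂ - Q₀ * K) ⟨(i:ℕ) - p, by have := i.isLt; omega⟩ j with hC
  have hrow : ∀ i : Fin (p+m),
      (fun j => NI 0 i j) = C i ∧ ∀ z ∈ Set.Icc (0:ℝ) 1, ∀ j,
        HasDerivWithinAt (fun t => NI t i j)
          ((1 / lam i z) * (Bm z i j + Matrix.vecMul (fun k => NI z i k) Fc j))
          (Set.Icc 0 1) z := by
    intro i
    have hr : ∀ z, (fun j => NI z i j)
        = Matrix.vecMul (C i) (NormedSpace.exp ((φ i z - φ i 0) • Fc))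
          + ∫ ζ in (0:ℝ)..z, (1 / lam i ζ) •
              Matrix.vecMul (fun j' => Bm ζ i j')
                (NormedSpace.exp ((φ i z - φ i ζ) • Fc)) := by
      intro z
      funext j
      rw [hNI]
      by_cases h : (i:ℕ) < p
      · rw [dif_pos h]
        have hc : C i = -(fun j' => K ⟨i, h⟩ j') := by
          funext j'; simp [hC, dif_pos h]
        have hrow2 : ∀ ζ : ℝ, (fun j' => (A₁ ζ * K - E₁ᵀ * G ζ) ⟨i, h⟩ j')
            = fun j' => Bm ζ i j' := by
          intro ζ; funext j'
          have hmm : A₁ ζ * K - E₁ᵀ * G ζ = E₁ᵀ * (A₀ ζ * K - G ζ) := by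
            rw [hA₁, Matrix.mul_sub, Matrix.mul_assoc]
          rw [hmm, mySelE1 E₁ hE₁ _ (⟨i, h⟩ : Fin p) j']
        have hint : (fun ζ => (1 / lam i ζ) •
              Matrix.vecMul (fun j' => (A₁ ζ * K - E₁ᵀ * G ζ) ⟨i, h⟩ j') (Ψ i z ζ))
            = fun ζ => (1 / lam i ζ) •
              Matrix.vecMul (fun j' => Bm ζ i j')
                (NormedSpace.exp ((φ i z - φ i ζ) • Fc)) := by
          funext ζ; rw [hrow2 ζ, hΨ]
        rw [hint, hc, Matrix.neg_vecMul, hΨ]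
      · rw [dif_neg h]
        have hc : C i = fun j' => (C₂ - Q₀ * K) ⟨(i:ℕ) - p, by have := i.isLt; omega⟩ j' := by
          funext j'; simp [hC, dif_neg h]
        have hrow2 : ∀ ζ : ℝ, (fun j' => (A₂ ζ * K - E₂ᵀ * G ζ)
              ⟨(i:ℕ) - p, by have := i.isLt; omega⟩ j')
            = fun j' => Bm ζ i j' := by
          intro ζ; funext j'
          have hmm : A₂ ζ * K - E₂ᵀ * G ζ = E₂ᵀ * (A₀ ζ * K - G ζ) := by
            rw [hA₂, Matrix.mul_sub, Matrix.mul_assoc]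
          rw [hmm, mySelE2 E₂ hE₂ _ (⟨(i:ℕ) - p, by have := i.isLt; omega⟩ : Fin m) j']
          have hidx : (⟨p + ((⟨(i:ℕ) - p, by have := i.isLt; omega⟩ : Fin m) : ℕ),
              by have := i.isLt; omega⟩ : Fin (p+m)) = i := by
            apply Fin.ext; simp; omega
          rw [hidx]
        have hint : (fun ζ => (1 / lam i ζ) •
              Matrix.vecMul (fun j' => (A₂ ζ * K - E₂ᵀ * G ζ)
                ⟨(i:ℕ) - p, by have := i.isLt; omega⟩ j') (Ψ i z ζ))
            = fun ζ => (1 / lam i ζ) •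
              Matrix.vecMul (fun j' => Bm ζ i j')
                (NormedSpace.exp ((φ i z - φ i ζ) • Fc)) := by
          funext ζ; rw [hrow2 ζ, hΨ]
        rw [hint, hc, hΨ]
    exact myRowSolution Fc (lam i) (hlamc i) (hlamne i) (C i)
      (fun z j => Bm z i j) (fun j => hBc i j) (φ i) (hφ i)
      (fun z j => NI z i j) hr
  have hNI0 : ∀ i j, NI 0 i j = C i j := fun i j => congrFun (hrow i).1 j
  have hE1NI0 : E₁ᵀ * NI 0 = -K := by
    ext a j
    rw [mySelE1 E₁ hE₁ (NI 0) a j, hNI0]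
    have hlt : (((⟨(a:ℕ), by omega⟩ : Fin (p+m))) : ℕ) < p := a.isLt
    simp only [hC]
    rw [dif_pos hlt]
    have hidx : (⟨(((⟨(a:ℕ), by omega⟩ : Fin (p+m))) : ℕ), hlt⟩ : Fin p) = a := Fin.ext rfl
    rw [hidx, Matrix.neg_apply]
  have hE2NI0 : E₂ᵀ * NI 0 = C₂ - Q₀ * K := by
    ext b j
    rw [mySelE2 E₂ hE₂ (NI 0) b j, hNI0]
    have hnlt : ¬ (((⟨p + (b:ℕ), by omega⟩ : Fin (p+m))) : ℕ) < p := by simp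
    simp only [hC]
    rw [dif_neg hnlt]
    have hidx : (⟨(((⟨p + (b:ℕ), by omega⟩ : Fin (p+m))) : ℕ) - p, by omega⟩ : Fin m) = b := by
      apply Fin.ext; simp
    rw [hidx]
  refine ⟨fun z i j => (1 / lam i z) *
      (Bm z i j + Matrix.vecMul (fun k => NI z i k) Fc j), ?_, ?_, hE1NI0, ?_⟩
  · intro z hz i j
    exact (hrow i).2 z hz j
  · intro z hz
    ext i j
    rw [hΛ z, hE1NI0, Matrix.mul_neg, neg_neg]
    simp only [Matrix.sub_apply, Matrix.diagonal_mul]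
    have hvm : (NI z * Fc) i j = Matrix.vecMul (fun k => NI z i k) Fc j := by
      simp [Matrix.mul_apply, Matrix.vecMul, dotProduct]
    rw [hvm]
    have hne := hlamne i z hz
    have hcancel : lam i z * ((1 / lam i z) *
        (Bm z i j + Matrix.vecMul (fun k => NI z i k) Fc j))
        = Bm z i j + Matrix.vecMul (fun k => NI z i k) Fc j := by
      field_simp
    erw [Matrix.diagonal_mul]; rw [hcancel]
    simp [hBm, Matrix.sub_apply]
  · rw [Matrix.sub_mul, Matrix.mul_assoc, hE1NI0, hE2NI0, Matrix.mul_neg, sub_neg_eq_add,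
      sub_add_cancel]
end

section
/- (Solvability of the ODE-PDE cascade decoupling equations Γ.) Let n = p + m with p, m ≥ 1, let Λ(z) = diag(ε₁(z),…,ε_p(z),−ε_{p+1}(z),…,−ε_n(z)) where each ε_k : [0,1] → ℝ is continuously differentiable with ε_k(z) > 0 on [0,1], and let E₁ = [I_p; 0] ∈ ℝ^{n×p}, E₂ = [0; I_m] ∈ ℝ^{n×m}. Let F ∈ ℝ^{n_ξ×n_ξ}, Q₁ ∈ ℝ^{p×m}, C₂ ∈ ℝ^{m×n_ξ}, let G_o : [0,1] → ℝ^{n×n_ξ} be continuous, and let S : [0,1] → ℝ^{p×n} be continuous such that the p×p block S₁(ζ) = S(ζ)E₁ is strictly upper triangular for every ζ ∈ [0,1]. Then the boundary value problem Λ(z)·Γ'(z) = Γ(z)·F − G_o(z) for z ∈ [0,1], E₂ᵀΓ(0) = C₂, (E₁ᵀ − Q₁E₂ᵀ)Γ(1) = −∫₀¹ S(ζ)·Γ(ζ) dζ has exactly one continuously differentiable solution Γ : [0,1] → ℝ^{n×n_ξ}. -/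
open Matrix NormedSpace intervalIntegral MeasureTheory Set

namespace S12

variable {V : Type*} [NormedAddCommGroup V] [NormedSpace ℝ V] [CompleteSpace V]

noncomputable instance instNormedAlgebraRatCLM : NormedAlgebra ℚ (V →L[ℝ] V) :=
  NormedAlgebra.restrictScalars ℚ ℝ _

noncomputable def phi (c : ℝ → ℝ) (a z : ℝ) : ℝ := ∫ t in a..z, c t

lemma hasDerivAt_phi {c : ℝ → ℝ} (hc : Continuous c) (a z : ℝ) :
    HasDerivAt (phi c a) (c z) z :=
  (hc.integral_hasStrictDerivAt a z).hasDerivAt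

lemma continuous_phi {c : ℝ → ℝ} (hc : Continuous c) (a : ℝ) : Continuous (phi c a) :=
  continuous_iff_continuousAt.2 fun z => (hasDerivAt_phi hc a z).continuousAt

lemma expinv (A : V →L[ℝ] V) (t : ℝ) (x : V) :
    exp (t • A) (exp (-(t • A)) x) = x := by
  rw [← ContinuousLinearMap.mul_apply, ← exp_add_of_commute ((Commute.refl (t • A)).neg_right)]
  simp

lemma continuous_expphi (A : V →L[ℝ] V) {c : ℝ → ℝ} (hc : Continuous c) (a : ℝ) :
    Continuous (fun z => exp (phi c a z • A)) :=
  exp_continuous.comp ((continuous_phi hc a).smul continuous_const)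

lemma continuous_expphi_neg (A : V →L[ℝ] V) {c : ℝ → ℝ} (hc : Continuous c) (a : ℝ) :
    Continuous (fun z => exp (-(phi c a z • A))) :=
  exp_continuous.comp ((continuous_phi hc a).smul continuous_const).neg

noncomputable def isol (A : V →L[ℝ] V) (c : ℝ → ℝ) (g : ℝ → V) (a z : ℝ) : V :=
  ∫ s in a..z, c s • exp (-(phi c a s • A)) (g s)

lemma continuous_isol_integrand (A : V →L[ℝ] V) {c : ℝ → ℝ} {g : ℝ → V}
    (hc : Continuous c) (hg : Continuous g) (a : ℝ) :
    Continuous (fun s => c s • exp (-(phi c a s • A)) (g s)) :=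
  hc.smul ((continuous_expphi_neg A hc a).clm_apply hg)

lemma hasDerivAt_isol (A : V →L[ℝ] V) {c : ℝ → ℝ} {g : ℝ → V}
    (hc : Continuous c) (hg : Continuous g) (a z : ℝ) :
    HasDerivAt (isol A c g a) (c z • exp (-(phi c a z • A)) (g z)) z :=
  ((continuous_isol_integrand A hc hg a).integral_hasStrictDerivAt a z).hasDerivAt

noncomputable def sol (A : V →L[ℝ] V) (c : ℝ → ℝ) (g : ℝ → V) (a : ℝ) (v : V) (z : ℝ) : V :=
  exp (phi c a z • A) (v - isol A c g a z)

lemma sol_base (A : V →L[ℝ] V) (c : ℝ → ℝ) (g : ℝ → V) (a : ℝ) (v : V) :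
    sol A c g a v a = v := by
  simp [sol, isol, phi, intervalIntegral.integral_same]

lemma sol_affine (A : V →L[ℝ] V) (c : ℝ → ℝ) (g : ℝ → V) (a : ℝ) (v : V) (z : ℝ) :
    sol A c g a v z = exp (phi c a z • A) v + sol A c g a 0 z := by
  simp [sol, map_sub, map_zero, sub_eq_add_neg, map_neg]

lemma hasDerivAt_expphi (A : V →L[ℝ] V) {c : ℝ → ℝ} (hc : Continuous c) (a z : ℝ) :
    HasDerivAt (fun z => exp (phi c a z • A))
      (c z • (exp (phi c a z • A) * A)) z := by
  have h1 : HasDerivAt (fun t : ℝ => exp (t • A))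
      (exp (phi c a z • A) * A) (phi c a z) := hasDerivAt_exp_smul_const A _
  exact h1.scomp _ (hasDerivAt_phi hc a z)

lemma hasDerivAt_expphi_neg (A : V →L[ℝ] V) {c : ℝ → ℝ} (hc : Continuous c) (a z : ℝ) :
    HasDerivAt (fun z => exp (-(phi c a z • A)))
      ((-c z) • (exp (-(phi c a z • A)) * A)) z := by
  have h1 : HasDerivAt (fun t : ℝ => exp (t • A))
      (exp ((-phi c a z) • A) * A) (-phi c a z) := hasDerivAt_exp_smul_const A _
  have h2 := HasDerivAt.scomp (h := fun x => -phi c a x) z h1 ((hasDerivAt_phi hc a z).neg)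
  simp only [Function.comp_def, neg_smul] at h2 ⊢
  exact h2

set_option synthInstance.maxHeartbeats 1000000 in
lemma commA (A : V →L[ℝ] V) (t : ℝ) (x : V) :
    (exp (t • A) * A) x = A (exp (t • A) x) := by
  have h : Commute A (exp (t • A)) := ((Commute.refl A).smul_right t).exp_right
  rw [ContinuousLinearMap.mul_apply, ← ContinuousLinearMap.mul_apply (A), h.eq,
    ContinuousLinearMap.mul_apply]

lemma hasDerivAt_sol (A : V →L[ℝ] V) {c : ℝ → ℝ} {g : ℝ → V}
    (hc : Continuous c) (hg : Continuous g) (a : ℝ) (v : V) (z : ℝ) :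
    HasDerivAt (sol A c g a v) (c z • (A (sol A c g a v z) - g z)) z := by
  have hE := hasDerivAt_expphi A hc a z
  have hI := hasDerivAt_isol A hc hg a z
  have hu : HasDerivAt (fun z => v - isol A c g a z)
      (0 - c z • exp (-(phi c a z • A)) (g z)) z := (hasDerivAt_const z v).sub hI
  have h := hE.clm_apply hu
  have h2 : (c z • (exp (phi c a z • A) * A)) (v - isol A c g a z) +
      exp (phi c a z • A) (0 - c z • exp (-(phi c a z • A)) (g z))
      = c z • (A (sol A c g a v z) - g z) := by
    rw [ContinuousLinearMap.smul_apply, commA, zero_sub, map_neg, _root_.map_smul,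
      expinv]
    simp only [sol]
    module
  rw [h2] at h
  exact h

lemma continuous_sol (A : V →L[ℝ] V) {c : ℝ → ℝ} {g : ℝ → V}
    (hc : Continuous c) (hg : Continuous g) (a : ℝ) (v : V) :
    Continuous (sol A c g a v) :=
  continuous_iff_continuousAt.2 fun z => (hasDerivAt_sol A hc hg a v z).continuousAt

lemma sol_unique (A : V →L[ℝ] V) {c : ℝ → ℝ} {g : ℝ → V}
    (hc : Continuous c) (hg : Continuous g) {a : ℝ} (ha : a ∈ Icc (0:ℝ) 1)
    {η : ℝ → V}
    (hη : ∀ z ∈ Icc (0:ℝ) 1,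
      HasDerivWithinAt η (c z • (A (η z) - g z)) (Icc (0:ℝ) 1) z) :
    ∀ z ∈ Icc (0:ℝ) 1, η z = sol A c g a (η a) z := by
  set h : ℝ → V := fun z => exp (-(phi c a z • A)) (η z) + isol A c g a z with hh
  have hder : ∀ z ∈ Icc (0:ℝ) 1, HasDerivWithinAt h 0 (Icc (0:ℝ) 1) z := by
    intro z hz
    have hD := (hasDerivAt_expphi_neg A hc a z).hasDerivWithinAt (s := Icc (0:ℝ) 1)
    have h1 := hD.clm_apply (hη z hz)
    have h2 := (hasDerivAt_isol A hc hg a z).hasDerivWithinAt (s := Icc (0:ℝ) 1)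
    have h3 := h1.add h2
    have he : ((-c z) • (exp (-(phi c a z • A)) * A)) (η z) +
        exp (-(phi c a z • A)) (c z • (A (η z) - g z)) +
        c z • exp (-(phi c a z • A)) (g z) = 0 := by
      rw [ContinuousLinearMap.smul_apply, ContinuousLinearMap.mul_apply,
        _root_.map_smul, map_sub]
      module
    rw [he] at h3
    exact h3
  have hconst : ∀ z ∈ Icc (0:ℝ) 1, h z = h a := by
    intro z hz
    have := Convex.norm_image_sub_le_of_norm_hasDerivWithin_le (C := 0)
      (f' := fun _ => (0:V)) hder (fun x _ => by simp) (convex_Icc 0 1) ha hz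
    simpa [sub_eq_zero] using this
  intro z hz
  have hba : h a = η a := by simp [hh, phi, isol, intervalIntegral.integral_same]
  have := hconst z hz
  rw [hba] at this
  have h4 : exp (-(phi c a z • A)) (η z) = η a - isol A c g a z := by
    rw [hh] at this; simpa [eq_sub_iff_add_eq] using this
  have h5 := congrArg (fun x => exp (phi c a z • A) x) h4
  simpa [expinv, sol] using h5


section Main

variable {p m nxi : ℕ}
variable (F : Matrix (Fin nxi) (Fin nxi) ℝ)
variable (eps : Fin (p+m) → ℝ → ℝ)
variable (Go : ℝ → Matrix (Fin (p+m)) (Fin nxi) ℝ)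
variable (S : ℝ → Matrix (Fin p) (Fin (p+m)) ℝ)
variable (C₂ : Matrix (Fin m) (Fin nxi) ℝ)
variable (Q₁ : Matrix (Fin p) (Fin m) ℝ)

def cl (z : ℝ) : ℝ := max 0 (min 1 z)

lemma cl_mem (z : ℝ) : cl z ∈ Icc (0:ℝ) 1 :=
  ⟨le_max_left _ _, max_le (by norm_num) (min_le_left _ _)⟩

lemma cl_eq {z : ℝ} (hz : z ∈ Icc (0:ℝ) 1) : cl z = z := by
  rcases hz with ⟨h0, h1⟩; unfold cl; rw [min_eq_right h1, max_eq_right h0]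

lemma continuous_cl : Continuous cl :=
  continuous_const.max (continuous_const.min continuous_id)

noncomputable def AF : (Fin nxi → ℝ) →L[ℝ] (Fin nxi → ℝ) :=
  LinearMap.toContinuousLinearMap (Matrix.mulVecLin Fᵀ)

lemma AF_apply (v : Fin nxi → ℝ) (j : Fin nxi) : AF F v j = ∑ l, v l * F l j := by
  simp [AF, Matrix.mulVec, Matrix.vecMul, dotProduct, Matrix.transpose_apply, mul_comm]

noncomputable def ccd (k : Fin (p+m)) (z : ℝ) : ℝ :=
  (if (k:ℕ) < p then 1 else -1) / eps k (cl z)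

noncomputable def ggd (k : Fin (p+m)) (z : ℝ) : Fin nxi → ℝ := fun j => Go (cl z) k j

def aad (p : ℕ) {m : ℕ} (k : Fin (p+m)) : ℝ := if (k:ℕ) < p then 1 else 0

lemma aad_mem (k : Fin (p+m)) : aad p k ∈ Icc (0:ℝ) 1 := by
  unfold aad; split <;> norm_num

noncomputable def rv (k : Fin (p+m)) (v : Fin nxi → ℝ) : ℝ → Fin nxi → ℝ :=
  sol (AF F) (ccd eps k) (ggd Go k) (aad p k) v

noncomputable def vsel (x : Fin p → Fin nxi → ℝ) (k : Fin (p+m)) : Fin nxi → ℝ :=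
  if h : (k:ℕ) < p then x ⟨k, h⟩
  else fun l => C₂ ⟨(k:ℕ) - p, by have := k.isLt; omega⟩ l

noncomputable def Gam (x : Fin p → Fin nxi → ℝ) : ℝ → Matrix (Fin (p+m)) (Fin nxi) ℝ :=
  fun z => Matrix.of fun k j => rv F eps Go k (vsel C₂ x k) z j

noncomputable def SSd (i : Fin p) (k : Fin (p+m)) (ζ : ℝ) : ℝ := S (cl ζ) i k

noncomputable def EE (k : Fin (p+m)) (ζ : ℝ) : (Fin nxi → ℝ) →L[ℝ] (Fin nxi → ℝ) :=
  exp (phi (ccd eps k) (aad p k) ζ • AF F)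

lemma rv_affine (k : Fin (p+m)) (v : Fin nxi → ℝ) (z : ℝ) :
    rv F eps Go k v z = EE F eps k z v + rv F eps Go k 0 z :=
  sol_affine _ _ _ _ _ _

noncomputable def TF (x : Fin p → Fin nxi → ℝ) (i : Fin p) (ζ : ℝ) : Fin nxi → ℝ :=
  ∑ j : Fin p, SSd S i (Fin.castAdd m j) ζ • EE F eps (Fin.castAdd m j) ζ (x j)

noncomputable def Texpr (x : Fin p → Fin nxi → ℝ) (i : Fin p) : Fin nxi → ℝ :=
  ∫ ζ in (0:ℝ)..1, TF F eps S x i ζ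

noncomputable def IbF (i : Fin p) (ζ : ℝ) : Fin nxi → ℝ :=
  (∑ j : Fin p, SSd S i (Fin.castAdd m j) ζ • rv F eps Go (Fin.castAdd m j) 0 ζ) +
  (∑ j : Fin m, SSd S i (Fin.natAdd p j) ζ •
    rv F eps Go (Fin.natAdd p j) (fun l => C₂ j l) ζ)

noncomputable def Ib (i : Fin p) : Fin nxi → ℝ := ∫ ζ in (0:ℝ)..1, IbF F eps Go S C₂ i ζ

noncomputable def bexpr (i : Fin p) : Fin nxi → ℝ :=
  (fun l => ∑ j, Q₁ i j * rv F eps Go (Fin.natAdd p j) (fun l' => C₂ j l') 1 l)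
    - Ib F eps Go S C₂ i

lemma hcc (heps : ∀ k, ContDiffOn ℝ 1 (eps k) (Icc 0 1))
    (hpos : ∀ k, ∀ z ∈ Icc (0:ℝ) 1, 0 < eps k z) (k : Fin (p+m)) :
    Continuous (ccd eps k) := by
  apply Continuous.div continuous_const
  · exact ((heps k).continuousOn).comp_continuous continuous_cl cl_mem
  · intro z; exact (hpos k (cl z) (cl_mem z)).ne'

lemma hgg (hGo : ∀ i j, ContinuousOn (fun z => Go z i j) (Icc 0 1)) (k : Fin (p+m)) :
    Continuous (ggd Go k) :=
  continuous_pi fun j => (hGo k j).comp_continuous continuous_cl cl_mem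

lemma hSS (hScont : ∀ i j, ContinuousOn (fun ζ => S ζ i j) (Icc 0 1))
    (i : Fin p) (k : Fin (p+m)) : Continuous (SSd S i k) :=
  (hScont i k).comp_continuous continuous_cl cl_mem

lemma hEE (heps : ∀ k, ContDiffOn ℝ 1 (eps k) (Icc 0 1))
    (hpos : ∀ k, ∀ z ∈ Icc (0:ℝ) 1, 0 < eps k z) (k : Fin (p+m)) :
    Continuous (fun ζ => EE F eps k ζ) :=
  continuous_expphi _ (hcc eps heps hpos k) _

lemma hrv (heps : ∀ k, ContDiffOn ℝ 1 (eps k) (Icc 0 1))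
    (hpos : ∀ k, ∀ z ∈ Icc (0:ℝ) 1, 0 < eps k z)
    (hGo : ∀ i j, ContinuousOn (fun z => Go z i j) (Icc 0 1))
    (k : Fin (p+m)) (v : Fin nxi → ℝ) : Continuous (rv F eps Go k v) :=
  continuous_sol _ (hcc eps heps hpos k) (hgg Go hGo k) _ _

lemma rv_deriv (heps : ∀ k, ContDiffOn ℝ 1 (eps k) (Icc 0 1))
    (hpos : ∀ k, ∀ z ∈ Icc (0:ℝ) 1, 0 < eps k z)
    (hGo : ∀ i j, ContinuousOn (fun z => Go z i j) (Icc 0 1))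
    (k : Fin (p+m)) (v : Fin nxi → ℝ) (z : ℝ) :
    HasDerivAt (rv F eps Go k v)
      (ccd eps k z • (AF F (rv F eps Go k v z) - ggd Go k z)) z :=
  hasDerivAt_sol _ (hcc eps heps hpos k) (hgg Go hGo k) _ _ _

lemma rv_base (k : Fin (p+m)) (v : Fin nxi → ℝ) : rv F eps Go k v (aad p k) = v :=
  sol_base _ _ _ _ _

lemma hTF (heps : ∀ k, ContDiffOn ℝ 1 (eps k) (Icc 0 1))
    (hpos : ∀ k, ∀ z ∈ Icc (0:ℝ) 1, 0 < eps k z)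
    (hScont : ∀ i j, ContinuousOn (fun ζ => S ζ i j) (Icc 0 1))
    (x : Fin p → Fin nxi → ℝ) (i : Fin p) : Continuous (TF F eps S x i) :=
  continuous_finset_sum _ fun j _ =>
    (hSS S hScont i _).smul ((hEE F eps heps hpos _).clm_apply continuous_const)

lemma hIbF (heps : ∀ k, ContDiffOn ℝ 1 (eps k) (Icc 0 1))
    (hpos : ∀ k, ∀ z ∈ Icc (0:ℝ) 1, 0 < eps k z)
    (hGo : ∀ i j, ContinuousOn (fun z => Go z i j) (Icc 0 1))
    (hScont : ∀ i j, ContinuousOn (fun ζ => S ζ i j) (Icc 0 1))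
    (i : Fin p) : Continuous (IbF F eps Go S C₂ i) :=
  (continuous_finset_sum _ fun j _ =>
      (hSS S hScont i _).smul (hrv F eps Go heps hpos hGo _ _)).add
    (continuous_finset_sum _ fun j _ =>
      (hSS S hScont i _).smul (hrv F eps Go heps hpos hGo _ _))

noncomputable def TL (heps : ∀ k, ContDiffOn ℝ 1 (eps k) (Icc 0 1))
    (hpos : ∀ k, ∀ z ∈ Icc (0:ℝ) 1, 0 < eps k z)
    (hScont : ∀ i j, ContinuousOn (fun ζ => S ζ i j) (Icc 0 1)) :
    (Fin p → Fin nxi → ℝ) →ₗ[ℝ] (Fin p → Fin nxi → ℝ) where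
  toFun x := fun i => Texpr F eps S x i
  map_add' x y := by
    funext i
    show Texpr F eps S (x+y) i = Texpr F eps S x i + Texpr F eps S y i
    unfold Texpr
    rw [← intervalIntegral.integral_add
      ((hTF F eps S heps hpos hScont x i).intervalIntegrable _ _)
      ((hTF F eps S heps hpos hScont y i).intervalIntegrable _ _)]
    congr 1; funext ζ
    unfold TF
    rw [← Finset.sum_add_distrib]
    refine Finset.sum_congr rfl fun j _ => ?_
    simp [map_add, smul_add]
  map_smul' r x := by
    funext i
    show Texpr F eps S (r • x) i = r • Texpr F eps S x i
    unfold Texpr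
    rw [← intervalIntegral.integral_smul]
    congr 1; funext ζ
    unfold TF
    rw [Finset.smul_sum]
    refine Finset.sum_congr rfl fun j _ => ?_
    simp [smul_comm r]

lemma Scast {E₁ : Matrix (Fin (p+m)) (Fin p) ℝ}
    (hE₁ : ∀ i j, E₁ i j = if (i:ℕ) = (j:ℕ) then 1 else 0)
    (hStriu : ∀ ζ ∈ Icc (0:ℝ) 1, ∀ i j : Fin p, j ≤ i → (S ζ * E₁) i j = 0) :
    ∀ ζ ∈ Icc (0:ℝ) 1, ∀ i j : Fin p, (j:ℕ) ≤ (i:ℕ) →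
      S ζ i (Fin.castAdd m j) = 0 := by
  intro ζ hζ i j hle
  have h := hStriu ζ hζ i j (by rwa [Fin.le_def])
  rw [Matrix.mul_apply, Finset.sum_eq_single (Fin.castAdd m j)] at h
  · rwa [hE₁, if_pos (by simp), mul_one] at h
  · intro k _ hk
    rw [hE₁, if_neg, mul_zero]
    intro hkj
    exact hk (Fin.ext (by simpa using hkj))
  · simp

lemma vsel_upper (x : Fin p → Fin nxi → ℝ) (j : Fin p) :
    vsel C₂ x (Fin.castAdd m j) = x j := by
  unfold vsel
  rw [dif_pos (by simpa using j.isLt)]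
  apply congrArg x
  apply Fin.ext
  show ((Fin.castAdd m j : Fin (p+m)):ℕ) = (j:ℕ)
  simp

lemma vsel_lower (x : Fin p → Fin nxi → ℝ) (j : Fin m) :
    vsel C₂ x (Fin.natAdd p j) = fun l => C₂ j l := by
  unfold vsel
  rw [dif_neg (by simp)]
  funext l
  congr 1
  apply Fin.ext
  show ((Fin.natAdd p j : Fin (p+m)):ℕ) - p = (j:ℕ)
  simp

lemma SSd_zero {E₁ : Matrix (Fin (p+m)) (Fin p) ℝ}
    (hE₁ : ∀ i j, E₁ i j = if (i:ℕ) = (j:ℕ) then 1 else 0)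
    (hStriu : ∀ ζ ∈ Icc (0:ℝ) 1, ∀ i j : Fin p, j ≤ i → (S ζ * E₁) i j = 0)
    (i j : Fin p) (hle : (j:ℕ) ≤ (i:ℕ)) (ζ : ℝ) :
    SSd S i (Fin.castAdd m j) ζ = 0 :=
  Scast S hE₁ hStriu (cl ζ) (cl_mem ζ) i j hle

lemma TL_inj (heps : ∀ k, ContDiffOn ℝ 1 (eps k) (Icc 0 1))
    (hpos : ∀ k, ∀ z ∈ Icc (0:ℝ) 1, 0 < eps k z)
    (hScont : ∀ i j, ContinuousOn (fun ζ => S ζ i j) (Icc 0 1))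
    {E₁ : Matrix (Fin (p+m)) (Fin p) ℝ}
    (hE₁ : ∀ i j, E₁ i j = if (i:ℕ) = (j:ℕ) then 1 else 0)
    (hStriu : ∀ ζ ∈ Icc (0:ℝ) 1, ∀ i j : Fin p, j ≤ i → (S ζ * E₁) i j = 0) :
    Function.Injective ((LinearMap.id : (Fin p → Fin nxi → ℝ) →ₗ[ℝ] (Fin p → Fin nxi → ℝ)) + TL F eps S heps hpos hScont) := by
  rw [← LinearMap.ker_eq_bot]
  apply LinearMap.ker_eq_bot'.mpr
  intro x hx
  have hstep : ∀ i : Fin p, (∀ j : Fin p, (i:ℕ) < (j:ℕ) → x j = 0) → x i = 0 := by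
    intro i hj
    have hxi : x i + Texpr F eps S x i = 0 := by
      have := congrFun hx i
      exact this
    have hT0 : Texpr F eps S x i = 0 := by
      unfold Texpr
      rw [intervalIntegral.integral_congr (g := fun _ => (0 : Fin nxi → ℝ))
        (fun ζ _ => ?_), intervalIntegral.integral_zero]
      unfold TF
      apply Finset.sum_eq_zero
      intro j _
      rcases le_or_gt (j:ℕ) (i:ℕ) with h | h
      · rw [SSd_zero S hE₁ hStriu i j h, zero_smul]
      · rw [hj j h, map_zero, smul_zero]
    rwa [hT0, add_zero] at hxi
  have hall : ∀ N : ℕ, ∀ i : Fin p, p - (i:ℕ) ≤ N → x i = 0 := by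
    intro N
    induction N with
    | zero => intro i hi; exfalso; have := i.isLt; omega
    | succ N ih =>
      intro i _
      exact hstep i fun j hj => ih j (by have := j.isLt; omega)
  funext i
  exact hall p i (by omega)

lemma key (heps : ∀ k, ContDiffOn ℝ 1 (eps k) (Icc 0 1))
    (hpos : ∀ k, ∀ z ∈ Icc (0:ℝ) 1, 0 < eps k z)
    (hGo : ∀ i j, ContinuousOn (fun z => Go z i j) (Icc 0 1))
    (hScont : ∀ i j, ContinuousOn (fun ζ => S ζ i j) (Icc 0 1))
    (x : Fin p → Fin nxi → ℝ) (i : Fin p) (l : Fin nxi) :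
    (∫ ζ in (0:ℝ)..1, (S ζ * Gam F eps Go C₂ x ζ) i l)
      = (Texpr F eps S x i + Ib F eps Go S C₂ i) l := by
  have h1 : ∀ ζ ∈ uIcc (0:ℝ) 1,
      (S ζ * Gam F eps Go C₂ x ζ) i l
        = (TF F eps S x i ζ + IbF F eps Go S C₂ i ζ) l := by
    intro ζ hζ
    rw [Set.uIcc_of_le zero_le_one] at hζ
    have hcl : cl ζ = ζ := cl_eq hζ
    rw [Matrix.mul_apply, Fin.sum_univ_add]
    simp only [Pi.add_apply, TF, IbF, SSd, hcl, Finset.sum_apply, Pi.smul_apply,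
      smul_eq_mul]
    rw [← add_assoc, ← Finset.sum_add_distrib]
    congr 1
    · refine Finset.sum_congr rfl fun j _ => ?_
      show S ζ i (Fin.castAdd m j) * Gam F eps Go C₂ x ζ (Fin.castAdd m j) l = _
      have : Gam F eps Go C₂ x ζ (Fin.castAdd m j) l
          = rv F eps Go (Fin.castAdd m j) (x j) ζ l := by
        show rv F eps Go _ (vsel C₂ x (Fin.castAdd m j)) ζ l = _
        rw [vsel_upper]
      rw [this, rv_affine, Pi.add_apply, mul_add]
    · refine Finset.sum_congr rfl fun j _ => ?_
      show S ζ i (Fin.natAdd p j) * Gam F eps Go C₂ x ζ (Fin.natAdd p j) l = _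
      have : Gam F eps Go C₂ x ζ (Fin.natAdd p j) l
          = rv F eps Go (Fin.natAdd p j) (fun l' => C₂ j l') ζ l := by
        show rv F eps Go _ (vsel C₂ x (Fin.natAdd p j)) ζ l = _
        rw [vsel_lower]
      rw [this]
  rw [intervalIntegral.integral_congr h1]
  have hint : IntervalIntegrable
      (fun ζ => TF F eps S x i ζ + IbF F eps Go S C₂ i ζ) MeasureTheory.volume 0 1 :=
    ((hTF F eps S heps hpos hScont x i).add
      (hIbF F eps Go S C₂ heps hpos hGo hScont i)).intervalIntegrable _ _
  have h2 := (ContinuousLinearMap.proj (R := ℝ) (φ := fun _ : Fin nxi => ℝ)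
    l).intervalIntegral_comp_comm hint
  simp only [ContinuousLinearMap.proj_apply] at h2
  rw [h2, intervalIntegral.integral_add
    ((hTF F eps S heps hpos hScont x i).intervalIntegrable _ _)
    ((hIbF F eps Go S C₂ heps hpos hGo hScont i).intervalIntegrable _ _)]
  rfl

lemma rv_upper_one (i : Fin p) (v : Fin nxi → ℝ) :
    rv F eps Go (Fin.castAdd m i) v 1 = v := by
  have h : aad p (Fin.castAdd m i) = 1 := if_pos (by simpa using i.isLt)
  conv_lhs => rw [← h]
  exact rv_base F eps Go _ v

lemma rv_lower_zero (j : Fin m) (v : Fin nxi → ℝ) :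
    rv F eps Go (Fin.natAdd p j) v 0 = v := by
  have h : aad p (Fin.natAdd p j) = 0 := if_neg (by simp)
  conv_lhs => rw [← h]
  exact rv_base F eps Go _ v

lemma bc_char {E₁ : Matrix (Fin (p+m)) (Fin p) ℝ} {E₂ : Matrix (Fin (p+m)) (Fin m) ℝ}
    (hE₁ : ∀ i j, E₁ i j = if (i:ℕ) = (j:ℕ) then 1 else 0)
    (hE₂ : ∀ i j, E₂ i j = if (i:ℕ) = p + (j:ℕ) then 1 else 0)
    (x : Fin p → Fin nxi → ℝ) (i : Fin p) (l : Fin nxi) :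
    ((E₁ᵀ - Q₁ * E₂ᵀ) * Gam F eps Go C₂ x 1) i l
      = x i l - ∑ j, Q₁ i j * rv F eps Go (Fin.natAdd p j) (fun l' => C₂ j l') 1 l := by
  have hup : ∀ j : Fin p, (E₁ᵀ - Q₁ * E₂ᵀ) i (Fin.castAdd m j)
      = if j = i then 1 else 0 := by
    intro j
    rw [Matrix.sub_apply, Matrix.transpose_apply, hE₁, Matrix.mul_apply]
    rw [Finset.sum_eq_zero (fun j' _ => by
      rw [Matrix.transpose_apply, hE₂,
        if_neg (by have := j.isLt; simp only [Fin.coe_castAdd]; omega), mul_zero]),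
      sub_zero]
    have hc : ((Fin.castAdd m j : Fin (p+m)):ℕ) = (j:ℕ) := by simp
    rw [hc]
    simp [Fin.val_eq_val]
  have hlo : ∀ j : Fin m, (E₁ᵀ - Q₁ * E₂ᵀ) i (Fin.natAdd p j) = -Q₁ i j := by
    intro j
    rw [Matrix.sub_apply, Matrix.transpose_apply, hE₁,
      if_neg (by have := i.isLt; simp only [Fin.coe_natAdd]; omega), Matrix.mul_apply]
    rw [Finset.sum_eq_single j]
    · rw [Matrix.transpose_apply, hE₂, if_pos (by simp), mul_one, zero_sub]
    · intro j' _ hj'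
      rw [Matrix.transpose_apply, hE₂, if_neg (by
        simp only [Fin.coe_natAdd]
        intro hcon
        exact hj' (Fin.ext (by omega))), mul_zero]
    · simp
  rw [Matrix.mul_apply, Fin.sum_univ_add]
  have h1 : ∀ j : Fin p, (E₁ᵀ - Q₁ * E₂ᵀ) i (Fin.castAdd m j)
        * Gam F eps Go C₂ x 1 (Fin.castAdd m j) l
      = if j = i then Gam F eps Go C₂ x 1 (Fin.castAdd m i) l else 0 := by
    intro j
    rw [hup j]
    by_cases h : j = i
    · rw [if_pos h, if_pos h, one_mul, h]
    · rw [if_neg h, if_neg h, zero_mul]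
  rw [Finset.sum_congr rfl (fun j _ => h1 j), Finset.sum_ite_eq' Finset.univ i, if_pos (Finset.mem_univ i)]
  have h2 : Gam F eps Go C₂ x 1 (Fin.castAdd m i) l = x i l := by
    show rv F eps Go _ (vsel C₂ x (Fin.castAdd m i)) 1 l = _
    rw [vsel_upper, rv_upper_one]
  have h3 : ∀ j : Fin m, (E₁ᵀ - Q₁ * E₂ᵀ) i (Fin.natAdd p j)
        * Gam F eps Go C₂ x 1 (Fin.natAdd p j) l
      = -(Q₁ i j * rv F eps Go (Fin.natAdd p j) (fun l' => C₂ j l') 1 l) := by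
    intro j
    rw [hlo j]
    have : Gam F eps Go C₂ x 1 (Fin.natAdd p j) l
        = rv F eps Go (Fin.natAdd p j) (fun l' => C₂ j l') 1 l := by
      show rv F eps Go _ (vsel C₂ x (Fin.natAdd p j)) 1 l = _
      rw [vsel_lower]
    rw [this, neg_mul]
  rw [Finset.sum_congr rfl (fun j _ => h3 j), h2, Finset.sum_neg_distrib]
  ring

end Main
end S12



open Matrix

/-- A continuously differentiable solution `Γ` of the boundary value problem
`Λ(z)·Γ'(z) = Γ(z)·F − G_o(z)` on `[0,1]`, `E₂ᵀΓ(0) = C₂`,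
`(E₁ᵀ − Q₁E₂ᵀ)Γ(1) = −∫₀¹ S(ζ)·Γ(ζ) dζ`. -/
def IsSolGamma (p m nxi : ℕ)
    (Λ : ℝ → Matrix (Fin (p+m)) (Fin (p+m)) ℝ)
    (E₁ : Matrix (Fin (p+m)) (Fin p) ℝ)
    (E₂ : Matrix (Fin (p+m)) (Fin m) ℝ)
    (F : Matrix (Fin nxi) (Fin nxi) ℝ)
    (Q₁ : Matrix (Fin p) (Fin m) ℝ)
    (C₂ : Matrix (Fin m) (Fin nxi) ℝ)
    (Go : ℝ → Matrix (Fin (p+m)) (Fin nxi) ℝ)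
    (S : ℝ → Matrix (Fin p) (Fin (p+m)) ℝ)
    (Γ : ℝ → Matrix (Fin (p+m)) (Fin nxi) ℝ) : Prop :=
  ∃ Γ' : ℝ → Matrix (Fin (p+m)) (Fin nxi) ℝ,
    (∀ i j, ContinuousOn (fun z => Γ' z i j) (Set.Icc 0 1)) ∧
    (∀ z ∈ Set.Icc (0:ℝ) 1, ∀ i j,
      HasDerivWithinAt (fun t => Γ t i j) (Γ' z i j) (Set.Icc 0 1) z) ∧
    (∀ z ∈ Set.Icc (0:ℝ) 1, Λ z * Γ' z = Γ z * F - Go z) ∧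
    E₂ᵀ * Γ 0 = C₂ ∧
    (∀ i j, ((E₁ᵀ - Q₁ * E₂ᵀ) * Γ 1) i j = -∫ ζ in (0:ℝ)..1, (S ζ * Γ ζ) i j)

/-- solvability (existence and uniqueness of a continuously differentiable
solution) of the ODE-PDE cascade decoupling equations for `Γ`. -/
theorem statement12 (p m nxi : ℕ) (hp : 1 ≤ p) (hm : 1 ≤ m)
    (eps : Fin (p+m) → ℝ → ℝ)
    (heps : ∀ k, ContDiffOn ℝ 1 (eps k) (Set.Icc 0 1))
    (hpos : ∀ k, ∀ z ∈ Set.Icc (0:ℝ) 1, 0 < eps k z)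
    (Λ : ℝ → Matrix (Fin (p+m)) (Fin (p+m)) ℝ)
    (hΛ : ∀ z, Λ z = Matrix.diagonal
      (fun k : Fin (p+m) => if (k:ℕ) < p then eps k z else -eps k z))
    (E₁ : Matrix (Fin (p+m)) (Fin p) ℝ)
    (hE₁ : ∀ i j, E₁ i j = if (i:ℕ) = (j:ℕ) then 1 else 0)
    (E₂ : Matrix (Fin (p+m)) (Fin m) ℝ)
    (hE₂ : ∀ i j, E₂ i j = if (i:ℕ) = p + (j:ℕ) then 1 else 0)
    (F : Matrix (Fin nxi) (Fin nxi) ℝ)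
    (Q₁ : Matrix (Fin p) (Fin m) ℝ)
    (C₂ : Matrix (Fin m) (Fin nxi) ℝ)
    (Go : ℝ → Matrix (Fin (p+m)) (Fin nxi) ℝ)
    (hGo : ∀ i j, ContinuousOn (fun z => Go z i j) (Set.Icc 0 1))
    (S : ℝ → Matrix (Fin p) (Fin (p+m)) ℝ)
    (hScont : ∀ i j, ContinuousOn (fun ζ => S ζ i j) (Set.Icc 0 1))
    (hStriu : ∀ ζ ∈ Set.Icc (0:ℝ) 1, ∀ i j : Fin p, j ≤ i → (S ζ * E₁) i j = 0) :
    ∃ Γ : ℝ → Matrix (Fin (p+m)) (Fin nxi) ℝ,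
      IsSolGamma p m nxi Λ E₁ E₂ F Q₁ C₂ Go S Γ ∧
      ∀ Γ₂ : ℝ → Matrix (Fin (p+m)) (Fin nxi) ℝ,
        IsSolGamma p m nxi Λ E₁ E₂ F Q₁ C₂ Go S Γ₂ →
        ∀ z ∈ Set.Icc (0:ℝ) 1, Γ₂ z = Γ z := by
  classical
  have hinj := S12.TL_inj F eps S heps hpos hScont hE₁ hStriu
  have hsurj := LinearMap.injective_iff_surjective.mp hinj
  obtain ⟨x, hx⟩ := hsurj (S12.bexpr F eps Go S C₂ Q₁)
  have hxc : ∀ i, x i + S12.Texpr F eps S x i = S12.bexpr F eps Go S C₂ Q₁ i := by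
    intro i
    have h := congrFun hx i
    exact h
  refine ⟨S12.Gam F eps Go C₂ x, ?_, ?_⟩
  · refine ⟨fun z => Matrix.of fun k j =>
      (S12.ccd eps k z • (S12.AF F (fun l => S12.Gam F eps Go C₂ x z k l)
        - S12.ggd Go k z)) j, ?_, ?_, ?_, ?_, ?_⟩
    · intro k j
      apply Continuous.continuousOn
      have hrow : Continuous fun z => S12.rv F eps Go k (S12.vsel C₂ x k) z :=
        S12.hrv F eps Go heps hpos hGo k _
      have h1 : Continuous fun z => (S12.AF F (S12.rv F eps Go k (S12.vsel C₂ x k) z)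
          - S12.ggd Go k z) j := (continuous_apply j).comp
        (((S12.AF F).continuous.comp hrow).sub (S12.hgg Go hGo k))
      exact ((S12.hcc eps heps hpos k).smul h1)
    · intro z hz k j
      exact (hasDerivAt_pi.1
        (S12.rv_deriv F eps Go heps hpos hGo k (S12.vsel C₂ x k) z) j).hasDerivWithinAt
    · intro z hz
      ext k j
      rw [hΛ]
      rw [Matrix.diagonal_mul, Matrix.sub_apply, Matrix.mul_apply]
      simp only [Matrix.of_apply]
      have hne := (hpos k z hz).ne'
      simp only [Pi.smul_apply, Pi.sub_apply, smul_eq_mul, S12.ccd, S12.ggd,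
        S12.cl_eq hz]
      rw [S12.AF_apply]
      by_cases hk : (k:ℕ) < p
      · rw [if_pos hk, if_pos hk]; field_simp
      · rw [if_neg hk, if_neg hk]; field_simp
    · ext j l
      rw [Matrix.mul_apply, Finset.sum_eq_single (Fin.natAdd p j)]
      · rw [Matrix.transpose_apply, hE₂, if_pos (by simp), one_mul]
        show S12.rv F eps Go _ (S12.vsel C₂ x (Fin.natAdd p j)) 0 l = _
        rw [S12.vsel_lower, S12.rv_lower_zero]
      · intro k _ hk
        rw [Matrix.transpose_apply, hE₂,
          if_neg (fun hc => hk (Fin.ext (by simpa using hc))), zero_mul]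
      · simp
    · intro i l
      rw [S12.bc_char F eps Go C₂ Q₁ hE₁ hE₂ x i l,
        S12.key F eps Go S C₂ heps hpos hGo hScont x i l]
      have h := congrFun (hxc i) l
      simp only [Pi.add_apply, Pi.sub_apply, S12.bexpr] at h
      simp only [Pi.add_apply]
      linarith [h]
  · intro Γ₂ hsol z hz
    obtain ⟨Γ₂', hc', hd', hode, hbc0, hbc1⟩ := hsol
    have hder : ∀ k, ∀ t ∈ Set.Icc (0:ℝ) 1, HasDerivWithinAt (fun t => fun l => Γ₂ t k l)
        (S12.ccd eps k t • (S12.AF F (fun l => Γ₂ t k l) - S12.ggd Go k t))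
        (Set.Icc (0:ℝ) 1) t := by
      intro k t ht
      apply hasDerivWithinAt_pi.2
      intro j
      have h1 := hd' t ht k j
      have h3 := congrFun (congrFun (hode t ht) k) j
      rw [hΛ] at h3
      rw [Matrix.diagonal_mul, Matrix.sub_apply, Matrix.mul_apply] at h3
      have hne := (hpos k t ht).ne'
      have h2 : Γ₂' t k j = (S12.ccd eps k t •
          (S12.AF F (fun l => Γ₂ t k l) - S12.ggd Go k t)) j := by
        simp only [Pi.smul_apply, Pi.sub_apply, smul_eq_mul, S12.ccd, S12.ggd,
          S12.cl_eq ht]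
        rw [S12.AF_apply]
        by_cases hk : (k:ℕ) < p
        · rw [if_pos hk] at h3 ⊢; rw [← h3]; field_simp
        · rw [if_neg hk] at h3 ⊢; rw [← h3]; field_simp
      exact h2 ▸ h1
    have hrow : ∀ k, ∀ t ∈ Set.Icc (0:ℝ) 1, (fun l => Γ₂ t k l)
        = S12.rv F eps Go k (fun l => Γ₂ (S12.aad p k) k l) t := by
      intro k
      exact S12.sol_unique (S12.AF F) (S12.hcc eps heps hpos k) (S12.hgg Go hGo k)
        (S12.aad_mem k) (hder k)
    have hlow : ∀ j : Fin m, (fun l => Γ₂ 0 (Fin.natAdd p j) l) = fun l => C₂ j l := by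
      intro j; funext l
      have h := congrFun (congrFun hbc0 j) l
      rw [Matrix.mul_apply, Finset.sum_eq_single (Fin.natAdd p j)] at h
      · rw [Matrix.transpose_apply, hE₂, if_pos (by simp), one_mul] at h; exact h
      · intro k _ hk
        rw [Matrix.transpose_apply, hE₂,
          if_neg (fun hc => hk (Fin.ext (by simpa using hc))), zero_mul]
      · simp
    set y : Fin p → Fin nxi → ℝ := fun i => fun l => Γ₂ 1 (Fin.castAdd m i) l with hy
    have hveq : ∀ k, (fun l => Γ₂ (S12.aad p k) k l) = S12.vsel C₂ y k := by
      intro k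
      by_cases hk : (k:ℕ) < p
      · have ha : S12.aad p k = 1 := if_pos hk
        rw [ha]
        simp only [S12.vsel, dif_pos hk, hy]
        have hkk : Fin.castAdd m ⟨(k:ℕ), hk⟩ = k := Fin.ext rfl
        rw [hkk]
      · have ha : S12.aad p k = 0 := if_neg hk
        rw [ha]
        simp only [S12.vsel, dif_neg hk]
        have hkk : Fin.natAdd p ⟨(k:ℕ) - p, by have := k.isLt; omega⟩ = k :=
          Fin.ext (by simp only [Fin.coe_natAdd]; omega)
        conv_lhs => rw [← hkk]
        exact hlow _
    have hGamEq : ∀ t ∈ Set.Icc (0:ℝ) 1, Γ₂ t = S12.Gam F eps Go C₂ y t := by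
      intro t ht
      ext k l
      have h := congrFun (hrow k t ht) l
      rw [h]
      show _ = S12.rv F eps Go k (S12.vsel C₂ y k) t l
      rw [hveq k]
    have hyeq : ∀ i, y i + S12.Texpr F eps S y i = S12.bexpr F eps Go S C₂ Q₁ i := by
      intro i
      funext l
      have h := hbc1 i l
      rw [hGamEq 1 (by norm_num)] at h
      have hcongr : (∫ ζ in (0:ℝ)..1, (S ζ * Γ₂ ζ) i l)
          = ∫ ζ in (0:ℝ)..1, (S ζ * S12.Gam F eps Go C₂ y ζ) i l := by
        apply intervalIntegral.integral_congr
        intro ζ hζ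
        rw [Set.uIcc_of_le zero_le_one] at hζ
        show (S ζ * Γ₂ ζ) i l = (S ζ * S12.Gam F eps Go C₂ y ζ) i l
        rw [hGamEq ζ hζ]
      rw [hcongr] at h
      rw [S12.bc_char F eps Go C₂ Q₁ hE₁ hE₂ y i l,
        S12.key F eps Go S C₂ heps hpos hGo hScont y i l] at h
      simp only [Pi.add_apply] at h ⊢
      simp only [S12.bexpr, Pi.sub_apply]
      linarith [h]
    have hxy : y = x := by
      apply hinj
      rw [hx]
      funext i
      have h := hyeq i
      exact h
    rw [hGamEq z hz, hxy]
end

section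
/- (Unique solvability of the eigenvalue-parametrized boundary value problem from the observability proof.) Let n = p + m with p, m ≥ 1, let Λ(z) = diag(ε₁(z),…,ε_p(z),−ε_{p+1}(z),…,−ε_n(z)) where each ε_k : [0,1] → ℝ is continuously differentiable with ε_k(z) > 0 on [0,1], and let E₁ = [I_p; 0] ∈ ℝ^{n×p}, E₂ = [0; I_m] ∈ ℝ^{n×m}. Let μ ∈ ℂ, let g : [0,1] → ℂⁿ be continuous, let c ∈ ℂ^m, let Q₁ ∈ ℝ^{p×m}, and let S : [0,1] → ℝ^{p×n} be continuous such that S(ζ)E₁ is strictly upper triangular for every ζ ∈ [0,1]. Then the boundary value problem γ'(z) = μ·Λ(z)⁻¹·γ(z) + g(z) for z ∈ [0,1], E₂ᵀγ(0) = c, (E₁ᵀ − Q₁E₂ᵀ)γ(1) = −∫₀¹ S(ζ)·γ(ζ) dζ has exactly one continuously differentiable solution γ : [0,1] → ℂⁿ. -/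
open Matrix

namespace Stmt13

open intervalIntegral

noncomputable def Phi (α : ℝ → ℂ) (z : ℝ) : ℂ := ∫ t in (0:ℝ)..z, α t

lemma hasDerivAt_Phi {α : ℝ → ℂ} (hα : Continuous α) (z : ℝ) :
    HasDerivAt (Phi α) (α z) z :=
  intervalIntegral.integral_hasDerivAt_right (hα.intervalIntegrable _ _)
    (hα.stronglyMeasurableAtFilter _ _) hα.continuousAt

lemma continuous_Phi {α : ℝ → ℂ} (hα : Continuous α) : Continuous (Phi α) :=
  continuous_iff_continuousAt.2 fun z => (hasDerivAt_Phi hα z).continuousAt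

noncomputable def solInt (α G : ℝ → ℂ) (z : ℝ) : ℂ :=
  ∫ t in (0:ℝ)..z, Complex.exp (-(Phi α t)) * G t

lemma hasDerivAt_solInt {α G : ℝ → ℂ} (hα : Continuous α) (hG : Continuous G) (z : ℝ) :
    HasDerivAt (solInt α G) (Complex.exp (-(Phi α z)) * G z) z := by
  have hc : Continuous fun t => Complex.exp (-(Phi α t)) * G t :=
    (((continuous_Phi hα).neg).cexp).mul hG
  exact intervalIntegral.integral_hasDerivAt_right (hc.intervalIntegrable _ _)
    (hc.stronglyMeasurableAtFilter _ _) hc.continuousAt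

lemma continuous_solInt {α G : ℝ → ℂ} (hα : Continuous α) (hG : Continuous G) :
    Continuous (solInt α G) :=
  continuous_iff_continuousAt.2 fun z => (hasDerivAt_solInt hα hG z).continuousAt

noncomputable def sol (α G : ℝ → ℂ) (a : ℂ) (z : ℝ) : ℂ :=
  Complex.exp (Phi α z) * (a + solInt α G z)

lemma sol_zero (α G : ℝ → ℂ) (a : ℂ) : sol α G a 0 = a := by
  simp [sol, solInt, Phi]

lemma hasDerivAt_sol {α G : ℝ → ℂ} (hα : Continuous α) (hG : Continuous G) (a : ℂ) (z : ℝ) :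
    HasDerivAt (sol α G a) (α z * sol α G a z + G z) z := by
  have h1 : HasDerivAt (fun z => Complex.exp (Phi α z)) (Complex.exp (Phi α z) * α z) z :=
    (hasDerivAt_Phi hα z).cexp
  have h2 : HasDerivAt (fun z => a + solInt α G z) (Complex.exp (-(Phi α z)) * G z) z :=
    (hasDerivAt_solInt hα hG z).const_add a
  have h := h1.mul h2
  convert h using 1
  · rfl
  · rfl
  have hne : Complex.exp (Phi α z) ≠ 0 := Complex.exp_ne_zero _
  rw [Complex.exp_neg]
  field_simp [sol]
  rw [sol]
  ring

lemma continuous_sol {α G : ℝ → ℂ} (hα : Continuous α) (hG : Continuous G) (a : ℂ) :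
    Continuous (sol α G a) :=
  continuous_iff_continuousAt.2 fun z => (hasDerivAt_sol hα hG a z).continuousAt

/-- Uniqueness of the scalar linear ODE on `[0,1]`. -/
lemma sol_unique {α G : ℝ → ℂ} (hα : Continuous α) (hG : Continuous G)
    {f : ℝ → ℂ}
    (hf : ∀ z ∈ Set.Icc (0:ℝ) 1,
      HasDerivWithinAt f (α z * f z + G z) (Set.Icc 0 1) z) :
    ∀ z ∈ Set.Icc (0:ℝ) 1, f z = sol α G (f 0) z := by
  set u : ℝ → ℂ := fun z => Complex.exp (-(Phi α z)) * f z - solInt α G z with hu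
  have hud : ∀ z ∈ Set.Icc (0:ℝ) 1, HasDerivWithinAt u 0 (Set.Icc 0 1) z := by
    intro z hz
    have h1 : HasDerivAt (fun z => Complex.exp (-(Phi α z)))
        (Complex.exp (-(Phi α z)) * (-(α z))) z := ((hasDerivAt_Phi hα z).neg).cexp
    have h2 := (h1.hasDerivWithinAt (s := Set.Icc (0:ℝ) 1)).mul (hf z hz)
    have h3 := h2.sub ((hasDerivAt_solInt hα hG z).hasDerivWithinAt (s := Set.Icc (0:ℝ) 1))
    convert h3 using 1
    · rfl
    · rfl
    ring
  have hconst : ∀ z ∈ Set.Icc (0:ℝ) 1, u z = u 0 := by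
    intro z hz
    have := Convex.norm_image_sub_le_of_norm_hasDerivWithin_le
      (f := u) (f' := fun _ => 0) (C := 0) hud (by simp) (convex_Icc 0 1)
      (Set.left_mem_Icc.2 zero_le_one) hz
    have h0 : ‖u z - u 0‖ ≤ 0 := by simpa using this
    have := norm_le_zero_iff.mp h0
    exact sub_eq_zero.mp this
  intro z hz
  have h := hconst z hz
  have h0 : u 0 = f 0 := by simp [hu, Phi, solInt]
  rw [h0] at h
  have key : Complex.exp (-(Phi α z)) * f z = f 0 + solInt α G z := by
    simp only [hu] at h
    linear_combination h
  rw [Complex.exp_neg] at key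
  have hne : Complex.exp (Phi α z) ≠ 0 := Complex.exp_ne_zero _
  rw [sol]
  field_simp at key
  linear_combination key

/-- Unique solvability of a triangular linear system. -/
lemma triangular_solve {p : ℕ} (T : Matrix (Fin p) (Fin p) ℂ)
    (hdiag : ∀ i, T i i ≠ 0) (hlow : ∀ i j : Fin p, j < i → T i j = 0) (r : Fin p → ℂ) :
    ∃! b : Fin p → ℂ, T.mulVec b = r := by
  have hdet : IsUnit T.det := by
    rw [Matrix.det_of_upperTriangular (fun i j h => hlow i j h)]
    exact isUnit_iff_ne_zero.2 (Finset.prod_ne_zero_iff.2 fun i _ => hdiag i)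
  refine ⟨T⁻¹.mulVec r, ?_, ?_⟩
  · show T.mulVec (T⁻¹.mulVec r) = r
    rw [Matrix.mulVec_mulVec, Matrix.mul_nonsing_inv _ hdet, Matrix.one_mulVec]
  · intro b hb
    have hb' : T.mulVec b = r := hb
    rw [← hb', Matrix.mulVec_mulVec, Matrix.nonsing_inv_mul _ hdet, Matrix.one_mulVec]

noncomputable def cl (z : ℝ) : ℝ := min 1 (max 0 z)

lemma cl_mem (z : ℝ) : cl z ∈ Set.Icc (0:ℝ) 1 :=
  ⟨le_min zero_le_one (le_max_left 0 z), min_le_left _ _⟩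

lemma cl_eq {z : ℝ} (h : z ∈ Set.Icc (0:ℝ) 1) : cl z = z := by
  have h1 := h.1; have h2 := h.2
  simp [cl, max_eq_right h1, min_eq_right h2]

lemma continuous_cl : Continuous cl := by unfold cl; fun_prop

section Main

variable (p m : ℕ) (eps : Fin (p+m) → ℝ → ℝ) (μ : ℂ) (g : ℝ → (Fin (p+m) → ℂ))

noncomputable def dsgn (k : Fin (p+m)) (z : ℝ) : ℝ :=
  if (k:ℕ) < p then eps k (cl z) else -eps k (cl z)

lemma continuous_dsgn (heps : ∀ k, ContDiffOn ℝ 1 (eps k) (Set.Icc 0 1)) (k : Fin (p+m)) :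
    Continuous (dsgn p m eps k) := by
  have h : Continuous fun z => eps k (cl z) :=
    ((heps k).continuousOn).comp_continuous continuous_cl cl_mem
  unfold dsgn
  by_cases hk : (k:ℕ) < p <;> simp only [hk, if_true, if_false]
  · exact h
  · exact h.neg

lemma dsgn_ne (hpos : ∀ k, ∀ z ∈ Set.Icc (0:ℝ) 1, 0 < eps k z) (k : Fin (p+m)) (z : ℝ) :
    dsgn p m eps k z ≠ 0 := by
  have := hpos k (cl z) (cl_mem z)
  unfold dsgn
  by_cases hk : (k:ℕ) < p <;> simp only [hk, if_true, if_false]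
  · positivity
  · simpa using this.ne'

noncomputable def aF (k : Fin (p+m)) (z : ℝ) : ℂ :=
  μ * ((dsgn p m eps k z : ℝ) : ℂ)⁻¹

lemma continuous_aF (heps : ∀ k, ContDiffOn ℝ 1 (eps k) (Set.Icc 0 1))
    (hpos : ∀ k, ∀ z ∈ Set.Icc (0:ℝ) 1, 0 < eps k z) (k : Fin (p+m)) :
    Continuous (aF p m eps μ k) := by
  have h1 : Continuous fun z => ((dsgn p m eps k z : ℝ) : ℂ) :=
    Complex.continuous_ofReal.comp (continuous_dsgn p m eps heps k)
  have h2 : ∀ z, ((dsgn p m eps k z : ℝ) : ℂ) ≠ 0 := fun z =>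
    Complex.ofReal_ne_zero.2 (dsgn_ne p m eps hpos k z)
  exact continuous_const.mul (h1.inv₀ h2)

noncomputable def GF (k : Fin (p+m)) (z : ℝ) : ℂ := g (cl z) k

lemma continuous_GF (hg : ContinuousOn g (Set.Icc 0 1)) (k : Fin (p+m)) :
    Continuous (GF p m g k) :=
  (continuous_apply k).comp (hg.comp_continuous continuous_cl cl_mem)

noncomputable def XiF (k : Fin (p+m)) (z : ℝ) : ℂ := Complex.exp (Phi (aF p m eps μ k) z)

noncomputable def HF (k : Fin (p+m)) (z : ℝ) : ℂ :=
  XiF p m eps μ k z * solInt (aF p m eps μ k) (GF p m g k) z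

noncomputable def gamSol (a : Fin (p+m) → ℂ) (z : ℝ) (k : Fin (p+m)) : ℂ :=
  sol (aF p m eps μ k) (GF p m g k) (a k) z

lemma gamSol_decomp (a : Fin (p+m) → ℂ) (z : ℝ) (k : Fin (p+m)) :
    gamSol p m eps μ g a z k = a k * XiF p m eps μ k z + HF p m eps μ g k z := by
  simp only [gamSol, sol, XiF, HF]; ring

lemma gamSol_zero (a : Fin (p+m) → ℂ) : gamSol p m eps μ g a 0 = a := by
  funext k; simp [gamSol, sol_zero]

section ODE

variable (Λ : ℝ → Matrix (Fin (p+m)) (Fin (p+m)) ℝ)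
variable (hΛ : ∀ z, Λ z = Matrix.diagonal
      (fun k : Fin (p+m) => if (k:ℕ) < p then eps k z else -eps k z))

include hΛ in
lemma vec_field_eq (hpos : ∀ k, ∀ z ∈ Set.Icc (0:ℝ) 1, 0 < eps k z)
    {z : ℝ} (hz : z ∈ Set.Icc (0:ℝ) 1) (v : Fin (p+m) → ℂ) (k : Fin (p+m)) :
    (μ • (((Λ z).map Complex.ofReal)⁻¹).mulVec v + g z) k
      = aF p m eps μ k z * v k + GF p m g k z := by
  have h1 : (Λ z).map Complex.ofReal
      = Matrix.diagonal fun k => ((dsgn p m eps k z : ℝ) : ℂ) := by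
    rw [hΛ z, Matrix.diagonal_map (by simp)]
    congr 1
    funext k
    simp only [Function.comp, dsgn, cl_eq hz, apply_ite Complex.ofReal, Complex.ofReal_neg]
  rw [h1, Matrix.inv_diagonal]
  have hne : ∀ j, ((dsgn p m eps j z : ℝ) : ℂ) ≠ 0 := fun j =>
    Complex.ofReal_ne_zero.2 (dsgn_ne p m eps hpos j z)
  set w : Fin (p+m) → ℂ := fun j => ((dsgn p m eps j z : ℝ) : ℂ) with hw
  have hinv : Ring.inverse w = w⁻¹ := by
    have hu : IsUnit w := by
      refine ⟨⟨w, w⁻¹, ?_, ?_⟩, rfl⟩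
      · funext j; exact mul_inv_cancel₀ (hne j)
      · funext j; exact inv_mul_cancel₀ (hne j)
    obtain ⟨u, hu⟩ := hu
    rw [← hu, Ring.inverse_unit]
    funext j
    have h1 : (u : Fin (p+m) → ℂ) j * ((u⁻¹).val) j = 1 :=
      congrFun u.mul_inv j
    show ((u⁻¹).val) j = (u.val)⁻¹ j
    rw [Pi.inv_apply]
    exact (inv_eq_of_mul_eq_one_right h1).symm
  rw [hinv]
  simp only [Pi.add_apply, Pi.smul_apply, smul_eq_mul, Matrix.mulVec_diagonal,
    Pi.inv_apply, hw, aF, GF, cl_eq hz]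
  ring

variable (heps : ∀ k, ContDiffOn ℝ 1 (eps k) (Set.Icc 0 1))
variable (hpos : ∀ k, ∀ z ∈ Set.Icc (0:ℝ) 1, 0 < eps k z)
variable (hg : ContinuousOn g (Set.Icc 0 1))

include hΛ heps hpos hg in
lemma gamSol_ode (a : Fin (p+m) → ℂ) :
    ∀ z ∈ Set.Icc (0:ℝ) 1,
      HasDerivWithinAt (gamSol p m eps μ g a)
        (μ • (((Λ z).map Complex.ofReal)⁻¹).mulVec (gamSol p m eps μ g a z) + g z)
        (Set.Icc 0 1) z := by
  intro z hz
  rw [hasDerivWithinAt_pi]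
  intro k
  rw [vec_field_eq p m eps μ g Λ hΛ hpos hz]
  exact ((hasDerivAt_sol (continuous_aF p m eps μ heps hpos k)
    (continuous_GF p m g hg k) (a k) z).hasDerivWithinAt)

include heps hpos hg in
lemma gamSol_continuous (a : Fin (p+m) → ℂ) : Continuous (gamSol p m eps μ g a) :=
  continuous_pi fun k => continuous_sol (continuous_aF p m eps μ heps hpos k)
    (continuous_GF p m g hg k) (a k)

include hΛ heps hpos hg in
lemma ode_unique {γ₂ : ℝ → Fin (p+m) → ℂ}
    (hd : ∀ z ∈ Set.Icc (0:ℝ) 1,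
      HasDerivWithinAt γ₂
        (μ • (((Λ z).map Complex.ofReal)⁻¹).mulVec (γ₂ z) + g z) (Set.Icc 0 1) z) :
    ∀ z ∈ Set.Icc (0:ℝ) 1, γ₂ z = gamSol p m eps μ g (γ₂ 0) z := by
  intro z hz
  funext k
  exact sol_unique (continuous_aF p m eps μ heps hpos k) (continuous_GF p m g hg k)
    (f := fun z => γ₂ z k)
    (fun z hz => by
      have := hasDerivWithinAt_pi.1 (hd z hz) k
      rwa [vec_field_eq p m eps μ g Λ hΛ hpos hz] at this) z hz

end ODE

section Mats

variable (E₁ : Matrix (Fin (p+m)) (Fin p) ℝ) (E₂ : Matrix (Fin (p+m)) (Fin m) ℝ)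
variable (Q₁ : Matrix (Fin p) (Fin m) ℝ) (S : ℝ → Matrix (Fin p) (Fin (p+m)) ℝ)
variable (c : Fin m → ℂ)

lemma delta_sum {N : ℕ} {nval : ℕ} (t : Fin N) (ht : (t:ℕ) = nval) (w : Fin N → ℂ) :
    ∑ k : Fin N, (((if (k:ℕ) = nval then (1:ℝ) else 0) : ℝ) : ℂ) * w k = w t := by
  have h : ∀ k : Fin N, (((if (k:ℕ) = nval then (1:ℝ) else 0) : ℝ) : ℂ) * w k
      = if k = t then w k else 0 := by
    intro k
    by_cases h : k = t
    · subst h; simp [ht]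
    · have hne : ¬((k:ℕ) = nval) := fun hh => h (Fin.ext (by rw [hh, ht]))
      simp [h, hne]
  rw [Finset.sum_congr rfl fun k _ => h k, Finset.sum_ite_eq' Finset.univ]
  simp

lemma E1T_mulVec (hE₁ : ∀ i j, E₁ i j = if (i:ℕ) = (j:ℕ) then 1 else 0)
    (v : Fin (p+m) → ℂ) (i : Fin p) :
    (((E₁.map Complex.ofReal)ᵀ).mulVec v) i = v (Fin.castAdd m i) := by
  simp only [Matrix.mulVec, dotProduct, Matrix.transpose_apply, Matrix.map_apply, hE₁]
  exact delta_sum (Fin.castAdd m i) (by simp) v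

lemma E2T_mulVec (hE₂ : ∀ i j, E₂ i j = if (i:ℕ) = p + (j:ℕ) then 1 else 0)
    (v : Fin (p+m) → ℂ) (j : Fin m) :
    (((E₂.map Complex.ofReal)ᵀ).mulVec v) j = v (Fin.natAdd p j) := by
  simp only [Matrix.mulVec, dotProduct, Matrix.transpose_apply, Matrix.map_apply, hE₂]
  exact delta_sum (Fin.natAdd p j) (by simp) v

lemma QE2T_mulVec (hE₂ : ∀ i j, E₂ i j = if (i:ℕ) = p + (j:ℕ) then 1 else 0)
    (v : Fin (p+m) → ℂ) (i : Fin p) :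
    (((Q₁.map Complex.ofReal) * (E₂.map Complex.ofReal)ᵀ).mulVec v) i
      = ∑ j : Fin m, ((Q₁ i j : ℝ) : ℂ) * v (Fin.natAdd p j) := by
  simp only [Matrix.mulVec, dotProduct, Matrix.mul_apply, Matrix.transpose_apply,
    Matrix.map_apply, hE₂, Finset.sum_mul]
  rw [Finset.sum_comm]
  refine Finset.sum_congr rfl fun j _ => ?_
  have h : ∀ k : Fin (p+m), ((Q₁ i j : ℝ) : ℂ) * (((if (k:ℕ) = p + (j:ℕ) then (1:ℝ) else 0) : ℝ) : ℂ) * v k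
      = ((Q₁ i j : ℝ) : ℂ) * ((((if (k:ℕ) = p + (j:ℕ) then (1:ℝ) else 0) : ℝ) : ℂ) * v k) :=
    fun k => by ring
  rw [Finset.sum_congr rfl fun k _ => h k, ← Finset.mul_sum,
    delta_sum (Fin.natAdd p j) (by simp) v]

lemma S_mulVec (ζ : ℝ) (v : Fin (p+m) → ℂ) (i : Fin p) :
    ((((S ζ).map Complex.ofReal)).mulVec v) i = ∑ k, ((S ζ i k : ℝ) : ℂ) * v k := by
  simp [Matrix.mulVec, dotProduct, Matrix.map_apply]

lemma S_entry_eq (hE₁ : ∀ i j, E₁ i j = if (i:ℕ) = (j:ℕ) then 1 else 0)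
    (ζ : ℝ) (i j : Fin p) : (S ζ * E₁) i j = S ζ i (Fin.castAdd m j) := by
  simp only [Matrix.mul_apply, hE₁]
  have h : ∀ k : Fin (p+m), S ζ i k * (if (k:ℕ) = (j:ℕ) then (1:ℝ) else 0)
      = if k = Fin.castAdd m j then S ζ i k else 0 := by
    intro k
    by_cases h : k = Fin.castAdd m j
    · subst h; simp
    · have hne : ¬((k:ℕ) = (j:ℕ)) := fun hh => h (Fin.ext (by simpa using hh))
      simp [h, hne]
  rw [Finset.sum_congr rfl fun k _ => h k, Finset.sum_ite_eq' Finset.univ]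
  simp

section Ints

variable (heps : ∀ k, ContDiffOn ℝ 1 (eps k) (Set.Icc 0 1))
variable (hpos : ∀ k, ∀ z ∈ Set.Icc (0:ℝ) 1, 0 < eps k z)
variable (hg : ContinuousOn g (Set.Icc 0 1))
variable (hScont : ∀ i j, ContinuousOn (fun ζ => S ζ i j) (Set.Icc 0 1))

include heps hpos in
lemma continuous_XiF (k : Fin (p+m)) : Continuous (XiF p m eps μ k) :=
  (continuous_Phi (continuous_aF p m eps μ heps hpos k)).cexp

include heps hpos hg in
lemma continuous_HF (k : Fin (p+m)) : Continuous (HF p m eps μ g k) :=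
  (continuous_XiF p m eps μ heps hpos k).mul
    (continuous_solInt (continuous_aF p m eps μ heps hpos k) (continuous_GF p m g hg k))

noncomputable def WI (i : Fin p) (k : Fin (p+m)) : ℂ :=
  ∫ ζ in (0:ℝ)..1, ((S ζ i k : ℝ) : ℂ) * XiF p m eps μ k ζ

noncomputable def VI (i : Fin p) (k : Fin (p+m)) : ℂ :=
  ∫ ζ in (0:ℝ)..1, ((S ζ i k : ℝ) : ℂ) * HF p m eps μ g k ζ

include hScont in
lemma contOn_Sc (i : Fin p) (k : Fin (p+m)) :
    ContinuousOn (fun ζ => ((S ζ i k : ℝ) : ℂ)) (Set.Icc (0:ℝ) 1) :=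
  Complex.continuous_ofReal.comp_continuousOn (hScont i k)

include heps hpos hScont in
lemma intInt_SXi (i : Fin p) (k : Fin (p+m)) :
    IntervalIntegrable (fun ζ => ((S ζ i k : ℝ) : ℂ) * XiF p m eps μ k ζ)
      MeasureTheory.volume 0 1 := by
  apply ContinuousOn.intervalIntegrable
  rw [Set.uIcc_of_le zero_le_one]
  exact (contOn_Sc p m S hScont i k).mul
    (continuous_XiF p m eps μ heps hpos k).continuousOn

include heps hpos hg hScont in
lemma intInt_SH (i : Fin p) (k : Fin (p+m)) :
    IntervalIntegrable (fun ζ => ((S ζ i k : ℝ) : ℂ) * HF p m eps μ g k ζ)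
      MeasureTheory.volume 0 1 := by
  apply ContinuousOn.intervalIntegrable
  rw [Set.uIcc_of_le zero_le_one]
  exact (contOn_Sc p m S hScont i k).mul
    (continuous_HF p m eps μ g heps hpos hg k).continuousOn

include heps hpos hg hScont in
lemma integral_S_gamSol (i : Fin p) (a : Fin (p+m) → ℂ) :
    (∫ ζ in (0:ℝ)..1, (((S ζ).map Complex.ofReal).mulVec (gamSol p m eps μ g a ζ)) i)
      = ∑ k, (a k * WI p m eps μ S i k + VI p m eps μ g S i k) := by
  simp only [S_mulVec p m S, gamSol_decomp p m eps μ g a]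
  rw [intervalIntegral.integral_finset_sum]
  · refine Finset.sum_congr rfl fun k _ => ?_
    have h : (fun ζ => ((S ζ i k : ℝ) : ℂ) * (a k * XiF p m eps μ k ζ + HF p m eps μ g k ζ))
        = fun ζ => a k * (((S ζ i k : ℝ) : ℂ) * XiF p m eps μ k ζ)
            + ((S ζ i k : ℝ) : ℂ) * HF p m eps μ g k ζ := funext fun ζ => by ring
    rw [h, intervalIntegral.integral_add
        ((intInt_SXi p m eps μ S heps hpos hScont i k).const_mul _)
        (intInt_SH p m eps μ g S heps hpos hg hScont i k),
      intervalIntegral.integral_const_mul]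
    rfl
  · intro k _
    have h : (fun ζ => ((S ζ i k : ℝ) : ℂ) * (a k * XiF p m eps μ k ζ + HF p m eps μ g k ζ))
        = fun ζ => a k * (((S ζ i k : ℝ) : ℂ) * XiF p m eps μ k ζ)
            + ((S ζ i k : ℝ) : ℂ) * HF p m eps μ g k ζ := funext fun ζ => by ring
    rw [h]
    exact ((intInt_SXi p m eps μ S heps hpos hScont i k).const_mul _).add
      (intInt_SH p m eps μ g S heps hpos hg hScont i k)

end Ints

noncomputable def assemble (b : Fin p → ℂ) (k : Fin (p+m)) : ℂ :=
  if h : (k:ℕ) < p then b ⟨(k:ℕ), h⟩ else c ⟨(k:ℕ) - p, by omega⟩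

lemma assemble_cast (b : Fin p → ℂ) (j : Fin p) :
    assemble p m c b (Fin.castAdd m j) = b j := by
  have h : ((Fin.castAdd m j : Fin (p+m)) : ℕ) < p := by simp [j.isLt]
  simp only [assemble, dif_pos h]
  congr 1 <;> exact Fin.ext (by simp)

lemma assemble_nat (b : Fin p → ℂ) (j : Fin m) :
    assemble p m c b (Fin.natAdd p j) = c j := by
  have h : ¬(((Fin.natAdd p j : Fin (p+m)) : ℕ) < p) := by simp
  simp only [assemble, dif_neg h]
  congr 1 <;> exact Fin.ext (by simp)

noncomputable def TT : Matrix (Fin p) (Fin p) ℂ :=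
  Matrix.of fun i j =>
    (if j = i then XiF p m eps μ (Fin.castAdd m i) 1 else 0)
      + WI p m eps μ S i (Fin.castAdd m j)

lemma TT_apply (i j : Fin p) : TT p m eps μ S i j
    = (if j = i then XiF p m eps μ (Fin.castAdd m i) 1 else 0)
      + WI p m eps μ S i (Fin.castAdd m j) := rfl

noncomputable def KK (i : Fin p) : ℂ :=
  HF p m eps μ g (Fin.castAdd m i) 1
    - (∑ j : Fin m, ((Q₁ i j : ℝ) : ℂ)
        * (c j * XiF p m eps μ (Fin.natAdd p j) 1 + HF p m eps μ g (Fin.natAdd p j) 1))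
    + ∑ j : Fin p, VI p m eps μ g S i (Fin.castAdd m j)
    + ∑ j : Fin m, (c j * WI p m eps μ S i (Fin.natAdd p j)
        + VI p m eps μ g S i (Fin.natAdd p j))

section Bdry

variable (heps : ∀ k, ContDiffOn ℝ 1 (eps k) (Set.Icc 0 1))
variable (hpos : ∀ k, ∀ z ∈ Set.Icc (0:ℝ) 1, 0 < eps k z)
variable (hg : ContinuousOn g (Set.Icc 0 1))
variable (hScont : ∀ i j, ContinuousOn (fun ζ => S ζ i j) (Set.Icc 0 1))
variable (hE₁ : ∀ i j, E₁ i j = if (i:ℕ) = (j:ℕ) then 1 else 0)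
variable (hE₂ : ∀ i j, E₂ i j = if (i:ℕ) = p + (j:ℕ) then 1 else 0)

include heps hpos hg hScont hE₁ hE₂ in
lemma boundary_eq (b : Fin p → ℂ) (i : Fin p) :
    (((E₁.map Complex.ofReal)ᵀ - (Q₁.map Complex.ofReal) * (E₂.map Complex.ofReal)ᵀ).mulVec
        (gamSol p m eps μ g (assemble p m c b) 1)) i
      + (∫ ζ in (0:ℝ)..1,
          (((S ζ).map Complex.ofReal).mulVec (gamSol p m eps μ g (assemble p m c b) ζ)) i)
      = ((TT p m eps μ S).mulVec b) i + KK p m eps μ g Q₁ S c i := by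
  rw [Matrix.sub_mulVec]
  simp only [Pi.sub_apply]
  rw [E1T_mulVec p m E₁ hE₁, QE2T_mulVec p m E₂ Q₁ hE₂,
    integral_S_gamSol p m eps μ g S heps hpos hg hScont i (assemble p m c b),
    Fin.sum_univ_add (f := fun k => assemble p m c b k * WI p m eps μ S i k
      + VI p m eps μ g S i k)]
  simp only [gamSol_decomp p m eps μ g, assemble_cast, assemble_nat]
  have hTT : ((TT p m eps μ S).mulVec b) i
      = XiF p m eps μ (Fin.castAdd m i) 1 * b i
        + ∑ j : Fin p, WI p m eps μ S i (Fin.castAdd m j) * b j := by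
    simp only [Matrix.mulVec, dotProduct, TT_apply, add_mul, Finset.sum_add_distrib, ite_mul,
      zero_mul, Finset.sum_ite_eq' Finset.univ, Finset.mem_univ, if_true]
  rw [hTT, KK]
  have h2 : ∑ j : Fin p, (b j * WI p m eps μ S i (Fin.castAdd m j)
        + VI p m eps μ g S i (Fin.castAdd m j))
      = (∑ j : Fin p, WI p m eps μ S i (Fin.castAdd m j) * b j)
        + ∑ j : Fin p, VI p m eps μ g S i (Fin.castAdd m j) := by
    rw [Finset.sum_add_distrib]
    congr 1
    exact Finset.sum_congr rfl fun j _ => mul_comm _ _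
  rw [h2]
  ring

include hE₁ in
lemma WI_zero (hStriu : ∀ ζ ∈ Set.Icc (0:ℝ) 1, ∀ i j : Fin p, j ≤ i → (S ζ * E₁) i j = 0)
    (i j : Fin p) (h : j ≤ i) : WI p m eps μ S i (Fin.castAdd m j) = 0 := by
  have heq : Set.EqOn
      (fun ζ => ((S ζ i (Fin.castAdd m j) : ℝ) : ℂ) * XiF p m eps μ (Fin.castAdd m j) ζ)
      (fun _ => (0:ℂ)) (Set.uIcc (0:ℝ) 1) := by
    rw [Set.uIcc_of_le zero_le_one]
    intro ζ hζ
    have h0 : S ζ i (Fin.castAdd m j) = 0 := by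
      rw [← S_entry_eq p m E₁ S hE₁ ζ i j]; exact hStriu ζ hζ i j h
    simp [h0]
  unfold WI
  rw [intervalIntegral.integral_congr heq]
  simp

include hE₁ in
lemma TT_diag_ne (hStriu : ∀ ζ ∈ Set.Icc (0:ℝ) 1, ∀ i j : Fin p, j ≤ i → (S ζ * E₁) i j = 0)
    (i : Fin p) : TT p m eps μ S i i ≠ 0 := by
  rw [TT_apply, WI_zero p m eps μ E₁ S hE₁ hStriu i i le_rfl, if_pos rfl, add_zero, XiF]
  exact Complex.exp_ne_zero _

include hE₁ in
lemma TT_low (hStriu : ∀ ζ ∈ Set.Icc (0:ℝ) 1, ∀ i j : Fin p, j ≤ i → (S ζ * E₁) i j = 0)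
    (i j : Fin p) (h : j < i) : TT p m eps μ S i j = 0 := by
  rw [TT_apply, WI_zero p m eps μ E₁ S hE₁ hStriu i j h.le, if_neg (Fin.ne_of_lt h), add_zero]

end Bdry

end Mats

end Main

end Stmt13

/-- A continuously differentiable solution `γ : [0,1] → ℂⁿ` of the eigenvalue-parametrized
boundary value problem `γ'(z) = μ·Λ(z)⁻¹·γ(z) + g(z)`, `E₂ᵀγ(0) = c`,
`(E₁ᵀ − Q₁E₂ᵀ)γ(1) = −∫₀¹ S(ζ)·γ(ζ) dζ`. -/
def IsSolGammaVec (p m : ℕ)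
    (Λ : ℝ → Matrix (Fin (p+m)) (Fin (p+m)) ℝ)
    (E₁ : Matrix (Fin (p+m)) (Fin p) ℝ)
    (E₂ : Matrix (Fin (p+m)) (Fin m) ℝ)
    (μ : ℂ)
    (g : ℝ → (Fin (p+m) → ℂ))
    (c : Fin m → ℂ)
    (Q₁ : Matrix (Fin p) (Fin m) ℝ)
    (S : ℝ → Matrix (Fin p) (Fin (p+m)) ℝ)
    (γ : ℝ → (Fin (p+m) → ℂ)) : Prop :=
  ContinuousOn γ (Set.Icc 0 1) ∧
  (∀ z ∈ Set.Icc (0:ℝ) 1,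
    HasDerivWithinAt γ
      (μ • (((Λ z).map (Complex.ofReal))⁻¹).mulVec (γ z) + g z) (Set.Icc 0 1) z) ∧
  ((E₂.map (Complex.ofReal))ᵀ).mulVec (γ 0) = c ∧
  (∀ i : Fin p,
    (((E₁.map (Complex.ofReal))ᵀ
        - (Q₁.map (Complex.ofReal)) * (E₂.map (Complex.ofReal))ᵀ).mulVec (γ 1)) i
      = -∫ ζ in (0:ℝ)..1, (((S ζ).map (Complex.ofReal)).mulVec (γ ζ)) i)

/-- unique solvability of the eigenvalue-parametrized boundary value problem
from the observability proof. -/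
theorem statement13 (p m : ℕ) (hp : 1 ≤ p) (hm : 1 ≤ m)
    (eps : Fin (p+m) → ℝ → ℝ)
    (heps : ∀ k, ContDiffOn ℝ 1 (eps k) (Set.Icc 0 1))
    (hpos : ∀ k, ∀ z ∈ Set.Icc (0:ℝ) 1, 0 < eps k z)
    (Λ : ℝ → Matrix (Fin (p+m)) (Fin (p+m)) ℝ)
    (hΛ : ∀ z, Λ z = Matrix.diagonal
      (fun k : Fin (p+m) => if (k:ℕ) < p then eps k z else -eps k z))
    (E₁ : Matrix (Fin (p+m)) (Fin p) ℝ)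
    (hE₁ : ∀ i j, E₁ i j = if (i:ℕ) = (j:ℕ) then 1 else 0)
    (E₂ : Matrix (Fin (p+m)) (Fin m) ℝ)
    (hE₂ : ∀ i j, E₂ i j = if (i:ℕ) = p + (j:ℕ) then 1 else 0)
    (μ : ℂ)
    (g : ℝ → (Fin (p+m) → ℂ))
    (hg : ContinuousOn g (Set.Icc 0 1))
    (c : Fin m → ℂ)
    (Q₁ : Matrix (Fin p) (Fin m) ℝ)
    (S : ℝ → Matrix (Fin p) (Fin (p+m)) ℝ)
    (hScont : ∀ i j, ContinuousOn (fun ζ => S ζ i j) (Set.Icc 0 1))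
    (hStriu : ∀ ζ ∈ Set.Icc (0:ℝ) 1, ∀ i j : Fin p, j ≤ i → (S ζ * E₁) i j = 0) :
    ∃ γ : ℝ → (Fin (p+m) → ℂ),
      IsSolGammaVec p m Λ E₁ E₂ μ g c Q₁ S γ ∧
      ∀ γ₂ : ℝ → (Fin (p+m) → ℂ),
        IsSolGammaVec p m Λ E₁ E₂ μ g c Q₁ S γ₂ →
        ∀ z ∈ Set.Icc (0:ℝ) 1, γ₂ z = γ z := by
  classical
  obtain ⟨b, hb, hbu⟩ := Stmt13.triangular_solve (Stmt13.TT p m eps μ S)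
    (Stmt13.TT_diag_ne p m eps μ E₁ S hE₁ hStriu)
    (fun i j h => Stmt13.TT_low p m eps μ E₁ S hE₁ hStriu i j h)
    (-(Stmt13.KK p m eps μ g Q₁ S c))
  have hcond : ∀ (b' : Fin p → ℂ) (i : Fin p),
      ((((E₁.map Complex.ofReal)ᵀ
          - (Q₁.map Complex.ofReal) * (E₂.map Complex.ofReal)ᵀ).mulVec
          (Stmt13.gamSol p m eps μ g (Stmt13.assemble p m c b') 1)) i
        = -∫ ζ in (0:ℝ)..1,
            (((S ζ).map Complex.ofReal).mulVec
              (Stmt13.gamSol p m eps μ g (Stmt13.assemble p m c b') ζ)) i)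
      ↔ ((Stmt13.TT p m eps μ S).mulVec b') i
          = (-(Stmt13.KK p m eps μ g Q₁ S c)) i := by
    intro b' i
    have hbe := Stmt13.boundary_eq p m eps μ g E₁ E₂ Q₁ S c heps hpos hg hScont hE₁ hE₂ b' i
    simp only [Pi.neg_apply]
    constructor
    · intro h
      linear_combination h - hbe
    · intro h
      linear_combination hbe + h
  refine ⟨Stmt13.gamSol p m eps μ g (Stmt13.assemble p m c b), ⟨?_, ?_, ?_, ?_⟩, ?_⟩
  · exact (Stmt13.gamSol_continuous p m eps μ g heps hpos hg _).continuousOn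
  · exact Stmt13.gamSol_ode p m eps μ g Λ hΛ heps hpos hg _
  · funext j
    rw [Stmt13.E2T_mulVec p m E₂ hE₂, Stmt13.gamSol_zero p m eps μ g,
      Stmt13.assemble_nat]
  · intro i
    exact (hcond b i).mpr (congrFun hb i)
  · intro γ₂ hγ₂ z hz
    obtain ⟨h2c, h2d, h2b0, h2b1⟩ := hγ₂
    have heq2 := Stmt13.ode_unique p m eps μ g Λ hΛ heps hpos hg h2d
    set b₂ : Fin p → ℂ := fun j => γ₂ 0 (Fin.castAdd m j) with hb₂
    have hass : Stmt13.assemble p m c b₂ = γ₂ 0 := by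
      funext k
      by_cases hk : (k:ℕ) < p
      · have hkk : Fin.castAdd m ⟨(k:ℕ), hk⟩ = k := Fin.ext rfl
        simp only [Stmt13.assemble, dif_pos hk, hb₂]
        rw [hkk]
      · have hc2 : ∀ j, γ₂ 0 (Fin.natAdd p j) = c j := by
          intro j
          rw [← Stmt13.E2T_mulVec p m E₂ hE₂ (γ₂ 0) j, h2b0]
        have hkk : Fin.natAdd p ⟨(k:ℕ) - p, by omega⟩ = k := by
          apply Fin.ext
          simp only [Fin.natAdd_mk]
          omega
        simp only [Stmt13.assemble, dif_neg hk]
        rw [← hc2 ⟨(k:ℕ) - p, by omega⟩, hkk]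
    have heq3 : ∀ w ∈ Set.Icc (0:ℝ) 1,
        γ₂ w = Stmt13.gamSol p m eps μ g (Stmt13.assemble p m c b₂) w := by
      intro w hw; rw [heq2 w hw, hass]
    have h4 : ∀ i, ((Stmt13.TT p m eps μ S).mulVec b₂) i
        = (-(Stmt13.KK p m eps μ g Q₁ S c)) i := by
      intro i
      apply (hcond b₂ i).mp
      have e1 : γ₂ 1 = Stmt13.gamSol p m eps μ g (Stmt13.assemble p m c b₂) 1 :=
        heq3 1 (by norm_num)
      have eI : (∫ ζ in (0:ℝ)..1, (((S ζ).map Complex.ofReal).mulVec (γ₂ ζ)) i)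
          = ∫ ζ in (0:ℝ)..1,
              (((S ζ).map Complex.ofReal).mulVec
                (Stmt13.gamSol p m eps μ g (Stmt13.assemble p m c b₂) ζ)) i := by
        apply intervalIntegral.integral_congr
        rw [Set.uIcc_of_le zero_le_one]
        intro ζ hζ
        simp only [heq3 ζ hζ]
      rw [← e1, ← eI]
      exact h2b1 i
    have hb2 : b₂ = b := hbu b₂ (funext h4)
    rw [heq2 z hz, ← hass, hb2]
end
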